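/- arXiv:1210.0181 — 4 statements merged into one kernel-verified Lean document; each statement's English description precedes it below -/
import Mathlib

section
/- Assume E is unbounded and fix p ∈ (1,2]. For Q ∈ 𝔻 and x ∈ Q set g_Q(x) := (∬_{Γ_Q(x)} |Θ1(Y)|² dY / δ(Y)^{n+1})^{p/2}. If there exist N ∈ (0,∞) and β ∈ (0,1) such that σ({x ∈ Q : g_Q(x) > N}) ≤ (1−β) σ(Q) for every Q ∈ 𝔻, then sup_{Q ∈ 𝔻} σ(Q)^{-1} ∫_Q ∬_{Γ_Q(x)} |Θ1(Y)|² dY / δ(Y)^{n+1} dσ(x) ≤ ((2−β)/β) N^{2/p}. -/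
open MeasureTheory Metric Set ENNReal NNReal

noncomputable section

namespace LocalTb

/-- The ambient Euclidean space `ℝ^{n+1}`. -/
abbrev Amb (n : ℕ) := EuclideanSpace ℝ (Fin (n + 1))

variable {n : ℕ} {E : Set (Amb n)}

/-- `σ`, the restriction of `n`-dimensional Hausdorff measure to `E`. -/
def sigmaE (n : ℕ) (E : Set (Amb n)) : Measure (Amb n) := μH[(n : ℝ)].restrict E

/-- `δ(X) = dist(X, E)`. -/
def del (E : Set (Amb n)) (X : Amb n) : ℝ := Metric.infDist X E

/-- `E` is a closed `n`-dimensional Ahlfors-David regular set with constant `CE`. -/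
def IsADR (n : ℕ) (E : Set (Amb n)) (CE : ℝ) : Prop :=
  IsClosed E ∧ 1 ≤ CE ∧
  ∀ x ∈ E, ∀ r : ℝ, 0 < r → ENNReal.ofReal r < EMetric.diam E →
    ENNReal.ofReal (CE⁻¹ * r ^ n) ≤ sigmaE n E (ball x r) ∧
      sigmaE n E (ball x r) ≤ ENNReal.ofReal (CE * r ^ n)

/-- The operator `Θ f (X) = ∫_E ψ(X,y) f(y) dσ(y)`. -/
def Theta (n : ℕ) (E : Set (Amb n)) (ψ : Amb n → Amb n → ℂ) (f : Amb n → ℂ)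
    (X : Amb n) : ℂ :=
  ∫ y, ψ X y * f y ∂(sigmaE n E)

/-- The standard size and Hölder conditions on the kernel `ψ`, with exponent `α` and
constant `Cψ`, on `Ω × E` where `Ω = ℝ^{n+1} \ E`. -/
def KernelCond (n : ℕ) (E : Set (Amb n)) (ψ : Amb n → Amb n → ℂ) (α Cψ : ℝ) : Prop :=
  0 < α ∧ 0 < Cψ ∧ Measurable (Function.uncurry ψ) ∧
  (∀ X, X ∉ E → ∀ y ∈ E,
    ‖ψ X y‖ ≤ Cψ * del E X ^ α / dist X y ^ ((n : ℝ) + α)) ∧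
  (∀ X, X ∉ E → ∀ y ∈ E, ∀ y' ∈ E, 2 * dist y y' ≤ dist X y →
    ‖ψ X y - ψ X y'‖ ≤ Cψ * dist y y' ^ α / dist X y ^ ((n : ℝ) + α))

/-- A dyadic grid (Christ-David cubes) on `E`. -/
structure DyadicGrid (n : ℕ) (E : Set (Amb n)) where
  Dk : ℤ → Set (Set (Amb n))
  α₀ : ℝ
  η₀ : ℝ
  C₁ : ℝ
  C₂ : ℝ
  α₀_pos : 0 < α₀
  η₀_mem : η₀ ∈ Set.Ioc (0 : ℝ) 1
  C₁_pos : 0 < C₁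
  C₂_pos : 0 < C₂
  scale_admissible : ∀ k : ℤ, (Dk k).Nonempty →
    ENNReal.ofReal ((2 : ℝ) ^ (-k)) < EMetric.diam E
  measurableSet : ∀ k, ∀ Q ∈ Dk k, MeasurableSet Q
  subset_E : ∀ k, ∀ Q ∈ Dk k, Q ⊆ E
  cover : ∀ k : ℤ, ENNReal.ofReal ((2 : ℝ) ^ (-k)) < EMetric.diam E → ⋃₀ Dk k = E
  pairwise_disj : ∀ k, ∀ Q ∈ Dk k, ∀ Q' ∈ Dk k, Q ≠ Q' → Q ∩ Q' = ∅
  nested : ∀ ⦃k k' : ℤ⦄, k < k' → ∀ Q ∈ Dk k, ∀ Q' ∈ Dk k', Q' ⊆ Q ∨ Q' ∩ Q = ∅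
  parent_unique : ∀ ⦃k k' : ℤ⦄, k < k' →
    ENNReal.ofReal ((2 : ℝ) ^ (-k)) < EMetric.diam E →
    ∀ Q' ∈ Dk k', ∃! Q, Q ∈ Dk k ∧ Q' ⊆ Q
  diam_bound : ∀ k, ∀ Q ∈ Dk k,
    ENNReal.ofReal (C₁⁻¹ * (2 : ℝ) ^ (-k)) ≤ EMetric.diam Q ∧
      EMetric.diam Q ≤ ENNReal.ofReal (C₁ * (2 : ℝ) ^ (-k))
  meas_bound : ∀ k, ∀ Q ∈ Dk k,
    ENNReal.ofReal (C₁⁻¹ * (2 : ℝ) ^ (-(k * (n : ℤ)))) ≤ sigmaE n E Q ∧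
      sigmaE n E Q ≤ ENNReal.ofReal (C₁ * (2 : ℝ) ^ (-(k * (n : ℤ))))
  surface_ball : ∀ k, ∀ Q ∈ Dk k, ∃ x ∈ Q, ball x (α₀ * (2 : ℝ) ^ (-k)) ∩ E ⊆ Q
  thin_boundary : ∀ k, ∀ Q ∈ Dk k, ∀ τ ∈ Set.Ioo (0 : ℝ) α₀,
    sigmaE n E {x ∈ Q | Metric.infDist x (E \ Q) ≤ τ * (2 : ℝ) ^ (-k)} ≤
      ENNReal.ofReal (C₂ * τ ^ η₀) * sigmaE n E Q

/-- The distance between two sets. -/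
def setDist (A B : Set (Amb n)) : ℝ := (⨅ x ∈ A, EMetric.infEdist x B).toReal

/-- The closed axis-parallel cube centered at `c` with side length `2^{-m}`. -/
def closedCube (c : Amb n) (m : ℤ) : Set (Amb n) :=
  {Y | ∀ i, |Y i - c i| ≤ (2 : ℝ) ^ (-m) / 2}

/-- The concentric dilate `tI` of the cube `closedCube c m`. -/
def dilCube (c : Amb n) (m : ℤ) (t : ℝ) : Set (Amb n) :=
  {Y | ∀ i, |Y i - c i| ≤ t * ((2 : ℝ) ^ (-m) / 2)}

/-- A Whitney decomposition of `Ω = ℝ^{n+1} \ E`: a family of closed cubes with dyadic side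
lengths (a cube is recorded as its center together with the scale `m`, the side being
`2^{-m}`), with pairwise disjoint interiors, covering `Ω`, and at the right distance
from `E`. -/
structure Whitney (n : ℕ) (E : Set (Amb n)) where
  cubes : Set (Amb n × ℤ)
  disj_int : ∀ p ∈ cubes, ∀ q ∈ cubes, p ≠ q →
    interior (closedCube p.1 p.2) ∩ interior (closedCube q.1 q.2) = ∅
  covers : (⋃ p ∈ cubes, closedCube p.1 p.2) = Eᶜ
  dist_lower : ∀ p ∈ cubes,
    4 * Metric.diam (closedCube p.1 p.2) ≤ setDist (dilCube p.1 p.2 4) E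
  dist_mid : ∀ p ∈ cubes, setDist (dilCube p.1 p.2 4) E ≤ setDist (closedCube p.1 p.2) E
  dist_upper : ∀ p ∈ cubes,
    setDist (closedCube p.1 p.2) E ≤ 40 * Metric.diam (closedCube p.1 p.2)

/-- The Whitney cubes `I` entering the Whitney region of a dyadic cube `Q` of
generation `k` (so that `ℓ(Q) = 2^{-k}`), with aperture `β`:
`ℓ(I)/8 ≤ ℓ(Q) ≤ 8 ℓ(I)` and `dist(Q,I) ≤ β ℓ(Q)`. -/
def whitneyIdx (W : Whitney n E) (β : ℝ) (k : ℤ) (Q : Set (Amb n)) : Set (Amb n × ℤ) :=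
  {p ∈ W.cubes | (2 : ℝ) ^ (-p.2) / 8 ≤ (2 : ℝ) ^ (-k) ∧
    (2 : ℝ) ^ (-k) ≤ 8 * (2 : ℝ) ^ (-p.2) ∧
    setDist Q (closedCube p.1 p.2) ≤ β * (2 : ℝ) ^ (-k)}

/-- The Whitney region `U_Q` of a dyadic cube `Q` of generation `k`. -/
def UQ (W : Whitney n E) (β : ℝ) (k : ℤ) (Q : Set (Amb n)) : Set (Amb n) :=
  ⋃ p ∈ whitneyIdx W β k Q, closedCube p.1 p.2

/-- The truncated cone `Γ_Q(x)`. -/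
def cone (G : DyadicGrid n E) (W : Whitney n E) (β : ℝ) (Q : Set (Amb n))
    (x : Amb n) : Set (Amb n) :=
  ⋃ (k' : ℤ), ⋃ Q' ∈ {Q' ∈ G.Dk k' | x ∈ Q' ∧ Q' ⊆ Q}, UQ W β k' Q'

/-- The good sawtooth cone `γ_Q(x)` relative to a family `F` of (dyadic cube, scale)
pairs: the union of Whitney regions of good subcubes `Q' ⊆ Q` containing `x`, i.e.
those such that whenever `Q'` meets some `Q_k ∈ F` then `ℓ(Q') > ℓ(Q_k)`. -/
def goodCone (G : DyadicGrid n E) (W : Whitney n E) (β : ℝ)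
    (F : Set (Set (Amb n) × ℤ)) (Q : Set (Amb n)) (x : Amb n) : Set (Amb n) :=
  ⋃ (k' : ℤ), ⋃ Q' ∈ {Q' ∈ G.Dk k' | x ∈ Q' ∧ Q' ⊆ Q ∧
      ∀ q ∈ F, (Q' ∩ q.1).Nonempty → (2 : ℝ) ^ (-q.2) < (2 : ℝ) ^ (-k')}, UQ W β k' Q'

/-- The conical square function `∬_{Γ_Q(x)} |Θ f(Y)|² dY/δ(Y)^{n+1}`. -/
def coneSq (G : DyadicGrid n E) (W : Whitney n E) (β : ℝ)
    (ψ : Amb n → Amb n → ℂ) (f : Amb n → ℂ) (Q : Set (Amb n)) (x : Amb n) : ℝ≥0∞ :=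
  ∫⁻ Y in cone G W β Q x,
    (‖Theta n E ψ f Y‖₊ : ℝ≥0∞) ^ 2 / ENNReal.ofReal (del E Y ^ (n + 1)) ∂volume

/-- The sawtooth conical square function `∬_{γ_Q(x)} |Θ f(Y)|² dY/δ(Y)^{n+1}`. -/
def goodConeSq (G : DyadicGrid n E) (W : Whitney n E) (β : ℝ)
    (ψ : Amb n → Amb n → ℂ) (F : Set (Set (Amb n) × ℤ)) (f : Amb n → ℂ)
    (Q : Set (Amb n)) (x : Amb n) : ℝ≥0∞ :=
  ∫⁻ Y in goodCone G W β F Q x,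
    (‖Theta n E ψ f Y‖₊ : ℝ≥0∞) ^ 2 / ENNReal.ofReal (del E Y ^ (n + 1)) ∂volume

/-- The dyadic Hardy-Littlewood maximal operator (acting on `ℝ≥0∞`-valued functions). -/
def dyadicMax (G : DyadicGrid n E) (g : Amb n → ℝ≥0∞) (x : Amb n) : ℝ≥0∞ :=
  ⨆ (k : ℤ) (Q : Set (Amb n)) (_ : Q ∈ G.Dk k) (_ : x ∈ Q),
    (sigmaE n E Q)⁻¹ * ∫⁻ y in Q, g y ∂(sigmaE n E)



/-! ### Auxiliary development for the good-lambda argument -/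

section GoodLambdaAux

variable {n : ℕ} {E : Set (Amb n)}

/-- Truncated cone: only generations `k' ≤ M` contribute. -/
def coneT (G : DyadicGrid n E) (W : Whitney n E) (β : ℝ) (M : ℤ) (Q : Set (Amb n))
    (x : Amb n) : Set (Amb n) :=
  ⋃ (k' : ℤ) (_ : k' ≤ M), ⋃ Q' ∈ {Q' ∈ G.Dk k' | x ∈ Q' ∧ Q' ⊆ Q}, UQ W β k' Q'

/-- Truncated conical square function with an abstract integrand. -/
def gT (G : DyadicGrid n E) (W : Whitney n E) (β : ℝ) (h : Amb n → ℝ≥0∞) (M : ℤ)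
    (Q : Set (Amb n)) (x : Amb n) : ℝ≥0∞ :=
  ∫⁻ Y in coneT G W β M Q x, h Y ∂volume

lemma mem_cone_iff {G : DyadicGrid n E} {W : Whitney n E} {β : ℝ} {Q : Set (Amb n)}
    {x Y : Amb n} :
    Y ∈ cone G W β Q x ↔ ∃ (k' : ℤ) (Q' : Set (Amb n)),
      (Q' ∈ G.Dk k' ∧ x ∈ Q' ∧ Q' ⊆ Q) ∧ Y ∈ UQ W β k' Q' := by
  constructor
  · intro hY
    rcases Set.mem_iUnion.1 hY with ⟨k', hY⟩
    rcases Set.mem_iUnion₂.1 hY with ⟨Q', hQ', hU⟩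
    exact ⟨k', Q', hQ', hU⟩
  · rintro ⟨k', Q', hQ', hU⟩
    exact Set.mem_iUnion.2 ⟨k', Set.mem_iUnion₂.2 ⟨Q', hQ', hU⟩⟩

lemma mem_coneT_iff {G : DyadicGrid n E} {W : Whitney n E} {β : ℝ} {M : ℤ}
    {Q : Set (Amb n)} {x Y : Amb n} :
    Y ∈ coneT G W β M Q x ↔ ∃ (k' : ℤ), k' ≤ M ∧ ∃ Q' : Set (Amb n),
      (Q' ∈ G.Dk k' ∧ x ∈ Q' ∧ Q' ⊆ Q) ∧ Y ∈ UQ W β k' Q' := by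
  constructor
  · intro hY
    rcases Set.mem_iUnion.1 hY with ⟨k', hY⟩
    rcases Set.mem_iUnion.1 hY with ⟨hk', hY⟩
    rcases Set.mem_iUnion₂.1 hY with ⟨Q', hQ', hU⟩
    exact ⟨k', hk', Q', hQ', hU⟩
  · rintro ⟨k', hk', Q', hQ', hU⟩
    exact Set.mem_iUnion.2 ⟨k', Set.mem_iUnion.2 ⟨hk', Set.mem_iUnion₂.2 ⟨Q', hQ', hU⟩⟩⟩

lemma Dk_exists (G : DyadicGrid n E) (hdiam : EMetric.diam E = ⊤) (k : ℤ) {x : Amb n}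
    (hx : x ∈ E) : ∃ S ∈ G.Dk k, x ∈ S := by
  have hc := G.cover k (by rw [hdiam]; exact ENNReal.ofReal_lt_top)
  rw [← hc] at hx
  exact hx

lemma Dk_eq (G : DyadicGrid n E) {k : ℤ} {Q Q' : Set (Amb n)} (hQ : Q ∈ G.Dk k)
    (hQ' : Q' ∈ G.Dk k) {x : Amb n} (hx : x ∈ Q) (hx' : x ∈ Q') : Q = Q' := by
  by_contra hne
  have hdisj := G.pairwise_disj k Q hQ Q' hQ' hne
  have : x ∈ Q ∩ Q' := ⟨hx, hx'⟩
  rw [hdisj] at this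
  exact this

lemma Dk_subset (G : DyadicGrid n E) {k k' : ℤ} (hkk : k ≤ k') {Q S : Set (Amb n)}
    (hQ : Q ∈ G.Dk k) (hS : S ∈ G.Dk k') {x : Amb n} (hxS : x ∈ S) (hxQ : x ∈ Q) :
    S ⊆ Q := by
  rcases lt_or_eq_of_le hkk with hlt | heq
  · rcases G.nested hlt Q hQ S hS with hsub | hdisj
    · exact hsub
    · exfalso
      have : x ∈ S ∩ Q := ⟨hxS, hxQ⟩
      rw [hdisj] at this
      exact this
  · subst heq
    exact le_of_eq (Dk_eq G hS hQ hxS hxQ)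

lemma sigma_pos (G : DyadicGrid n E) {k : ℤ} {Q : Set (Amb n)} (hQ : Q ∈ G.Dk k) :
    0 < sigmaE n E Q := by
  refine lt_of_lt_of_le ?_ (G.meas_bound k Q hQ).1
  refine ENNReal.ofReal_pos.2 (mul_pos (inv_pos.2 G.C₁_pos) ?_)
  exact zpow_pos (by norm_num) _

lemma sigma_ne_top (G : DyadicGrid n E) {k : ℤ} {Q : Set (Amb n)} (hQ : Q ∈ G.Dk k) :
    sigmaE n E Q ≠ ⊤ :=
  ((G.meas_bound k Q hQ).2.trans_lt ENNReal.ofReal_lt_top).ne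

lemma finite_subcubes (G : DyadicGrid n E) {k₀ : ℤ} {Q₀ : Set (Amb n)}
    (hQ₀ : Q₀ ∈ G.Dk k₀) (j : ℤ) : {S : Set (Amb n) | S ∈ G.Dk j ∧ S ⊆ Q₀}.Finite := by
  rw [← Set.finite_coe_iff]
  have hdisj : Pairwise (Function.onFun Disjoint fun i : {S : Set (Amb n) // S ∈ G.Dk j ∧ S ⊆ Q₀} => i.val) := by
    intro i i' hne
    have hvne : i.val ≠ i'.val := fun hv => hne (Subtype.ext hv)
    exact Set.disjoint_iff_inter_eq_empty.mpr
      (G.pairwise_disj j i.val i.2.1 i'.val i'.2.1 hvne)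
  have hfin := MeasureTheory.Measure.finite_const_le_meas_of_disjoint_iUnion (sigmaE n E)
    (ε := ENNReal.ofReal (G.C₁⁻¹ * (2 : ℝ) ^ (-(j * (n : ℤ)))))
    (ENNReal.ofReal_pos.2 (mul_pos (inv_pos.2 G.C₁_pos) (zpow_pos (by norm_num) _)))
    (As := fun i : {S : Set (Amb n) // S ∈ G.Dk j ∧ S ⊆ Q₀} => i.val)
    (fun i => G.measurableSet j i.val i.2.1) hdisj
    (ne_top_of_le_ne_top (sigma_ne_top G hQ₀)
      (measure_mono (Set.iUnion_subset fun i => i.2.2)))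
  have huniv : {i : {S : Set (Amb n) // S ∈ G.Dk j ∧ S ⊆ Q₀} |
      ENNReal.ofReal (G.C₁⁻¹ * (2 : ℝ) ^ (-(j * (n : ℤ)))) ≤ sigmaE n E i.val} = Set.univ :=
    Set.eq_univ_of_forall fun i => (G.meas_bound j i.val i.2.1).1
  rw [huniv] at hfin
  exact Set.finite_univ_iff.mp hfin

lemma coneT_mono (G : DyadicGrid n E) (W : Whitney n E) (β : ℝ) {M M' : ℤ} (hMM : M ≤ M')
    (Q : Set (Amb n)) (x : Amb n) : coneT G W β M Q x ⊆ coneT G W β M' Q x := by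
  intro Y hY
  rw [mem_coneT_iff] at hY ⊢
  obtain ⟨k', hk', rest⟩ := hY
  exact ⟨k', hk'.trans hMM, rest⟩

lemma coneT_subset_cone (G : DyadicGrid n E) (W : Whitney n E) (β : ℝ) (M : ℤ)
    (Q : Set (Amb n)) (x : Amb n) : coneT G W β M Q x ⊆ cone G W β Q x := by
  intro Y hY
  rw [mem_coneT_iff] at hY
  rw [mem_cone_iff]
  obtain ⟨k', _, Q', hrest⟩ := hY
  exact ⟨k', Q', hrest⟩

lemma cone_eq_iUnion_coneT (G : DyadicGrid n E) (W : Whitney n E) (β : ℝ) (k₀ : ℤ)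
    (Q : Set (Amb n)) (x : Amb n) :
    cone G W β Q x = ⋃ d : ℕ, coneT G W β (k₀ + d) Q x := by
  apply Set.Subset.antisymm
  · intro Y hY
    rw [mem_cone_iff] at hY
    obtain ⟨k', Q', hp, hU⟩ := hY
    refine Set.mem_iUnion.2 ⟨(k' - k₀).toNat, ?_⟩
    rw [mem_coneT_iff]
    exact ⟨k', by omega, Q', hp, hU⟩
  · exact Set.iUnion_subset fun d => coneT_subset_cone G W β (k₀ + d) Q x

lemma gT_mono (G : DyadicGrid n E) (W : Whitney n E) (β : ℝ) (h : Amb n → ℝ≥0∞)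
    {M M' : ℤ} (hMM : M ≤ M') (Q : Set (Amb n)) (x : Amb n) :
    gT G W β h M Q x ≤ gT G W β h M' Q x :=
  lintegral_mono' (Measure.restrict_mono (coneT_mono G W β hMM Q x) le_rfl) le_rfl

lemma coneT_eq_of_mem (G : DyadicGrid n E) (W : Whitney n E) (β : ℝ) {M : ℤ}
    {S : Set (Amb n)} (hS : S ∈ G.Dk M) (Q₀ : Set (Amb n)) {x y : Amb n}
    (hx : x ∈ S) (hy : y ∈ S) : coneT G W β M Q₀ x = coneT G W β M Q₀ y := by
  have key : ∀ u v : Amb n, u ∈ S → v ∈ S →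
      coneT G W β M Q₀ u ⊆ coneT G W β M Q₀ v := by
    intro u v hu hv Y hY
    rw [mem_coneT_iff] at hY ⊢
    obtain ⟨k', hk', Q', ⟨hQ', huQ', hsub⟩, hU⟩ := hY
    exact ⟨k', hk', Q', ⟨hQ', Dk_subset G hk' hQ' hS hu huQ' hv, hsub⟩, hU⟩
  exact Set.Subset.antisymm (key x y hx hy) (key y x hy hx)

lemma gT_exists_measurable (G : DyadicGrid n E) (W : Whitney n E) (β : ℝ)
    (h : Amb n → ℝ≥0∞) (hdiam : EMetric.diam E = ⊤) {k₀ M : ℤ} (hM : k₀ ≤ M)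
    {Q₀ : Set (Amb n)} (hQ₀ : Q₀ ∈ G.Dk k₀) :
    ∃ g : Amb n → ℝ≥0∞, Measurable g ∧ ∀ x ∈ Q₀, gT G W β h M Q₀ x = g x := by
  classical
  have hfin := finite_subcubes G hQ₀ M
  refine ⟨fun x => ∑ S ∈ hfin.toFinset,
    S.indicator (fun _ => ⨆ y ∈ S, gT G W β h M Q₀ y) x, ?_, ?_⟩
  · refine Finset.measurable_sum _ fun S hSmem => ?_
    exact Measurable.indicator measurable_const
      (G.measurableSet M S ((hfin.mem_toFinset.1 hSmem).1))
  · intro x hx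
    have hxE : x ∈ E := G.subset_E k₀ Q₀ hQ₀ hx
    obtain ⟨S₀, hS₀, hxS₀⟩ := Dk_exists G hdiam M hxE
    have hS₀Q : S₀ ⊆ Q₀ := Dk_subset G hM hQ₀ hS₀ hxS₀ hx
    have hmem : S₀ ∈ hfin.toFinset := hfin.mem_toFinset.2 ⟨hS₀, hS₀Q⟩
    show gT G W β h M Q₀ x = ∑ S ∈ hfin.toFinset,
      S.indicator (fun _ => ⨆ y ∈ S, gT G W β h M Q₀ y) x
    rw [Finset.sum_eq_single_of_mem S₀ hmem]
    · rw [Set.indicator_of_mem hxS₀]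
      apply le_antisymm
      · exact le_iSup₂ (f := fun y (_ : y ∈ S₀) => gT G W β h M Q₀ y) x hxS₀
      · refine iSup₂_le fun y hy => ?_
        unfold gT
        rw [coneT_eq_of_mem G W β hS₀ Q₀ hy hxS₀]
    · intro S hSmem hne
      apply Set.indicator_of_notMem
      intro hxS
      exact hne (Dk_eq G (hfin.mem_toFinset.1 hSmem).1 hS₀ hxS hxS₀)

lemma main_carleson (G : DyadicGrid n E) (W : Whitney n E) (β : ℝ) (h : Amb n → ℝ≥0∞)
    (hdiam : EMetric.diam E = ⊤) {lam β' : ℝ} (hlam : 0 < lam)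
    (hβ' : β' ∈ Set.Ioo (0 : ℝ) 1)
    (hdist : ∀ k, ∀ Q ∈ G.Dk k,
      sigmaE n E {x ∈ Q | ENNReal.ofReal lam < ∫⁻ Y in cone G W β Q x, h Y ∂volume} ≤
        ENNReal.ofReal (1 - β') * sigmaE n E Q) :
    ∀ (d : ℕ) (k₀ : ℤ), ∀ Q₀ ∈ G.Dk k₀,
      ∫⁻ x in Q₀, gT G W β h (k₀ + d) Q₀ x ∂(sigmaE n E) ≤
        ENNReal.ofReal ((2 - β') / β' * lam) * sigmaE n E Q₀ := by
  intro d
  induction d using Nat.strong_induction_on with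
  | _ d IH =>
  intro k₀ Q₀ hQ₀
  classical
  set σ := sigmaE n E with hσ
  set M : ℤ := k₀ + d with hMdef
  have hk₀M : k₀ ≤ M := by omega
  set c : ℝ≥0∞ := ENNReal.ofReal lam with hc
  set CC : ℝ≥0∞ := ENNReal.ofReal ((2 - β') / β' * lam) with hCC
  set F : Set (Amb n) := {x ∈ Q₀ | (∫⁻ Y in cone G W β Q₀ x, h Y ∂volume) ≤ c} with hF
  have hQ₀pos : 0 < σ Q₀ := sigma_pos G hQ₀
  have hQ₀top : σ Q₀ ≠ ⊤ := sigma_ne_top G hQ₀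
  have hbad : σ {x ∈ Q₀ | c < ∫⁻ Y in cone G W β Q₀ x, h Y ∂volume} ≤
      ENNReal.ofReal (1 - β') * σ Q₀ := hdist k₀ Q₀ hQ₀
  have hFsub : F ⊆ Q₀ := fun x hx => hx.1
  have hFne : F.Nonempty := by
    rw [Set.nonempty_iff_ne_empty]
    intro hFe
    have hsub : Q₀ ⊆ {x ∈ Q₀ | c < ∫⁻ Y in cone G W β Q₀ x, h Y ∂volume} := by
      intro x hx
      refine ⟨hx, ?_⟩
      by_contra hle
      have hxF : x ∈ F := ⟨hx, not_lt.1 hle⟩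
      rw [hFe] at hxF
      exact hxF
    have h1 : σ Q₀ ≤ ENNReal.ofReal (1 - β') * σ Q₀ := (measure_mono hsub).trans hbad
    have h2 : ENNReal.ofReal (1 - β') * σ Q₀ < 1 * σ Q₀ := by
      refine ENNReal.mul_lt_mul_left hQ₀pos.ne' hQ₀top ?_
      exact ENNReal.ofReal_lt_one.2 (by linarith [hβ'.1])
    rw [one_mul] at h2
    exact absurd (h1.trans_lt h2) (lt_irrefl _)
  -- pointwise estimate on points all of whose truncated ancestors see F
  have key1 : ∀ y ∈ F, ∀ x : Amb n,
      (∀ k' : ℤ, k' ≤ M → ∀ Q' ∈ G.Dk k', x ∈ Q' → Q' ⊆ Q₀ → y ∈ Q') →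
      gT G W β h M Q₀ x ≤ c := by
    intro y hy x hprop
    have hsub : coneT G W β M Q₀ x ⊆ cone G W β Q₀ y := by
      intro Y hY
      rw [mem_coneT_iff] at hY
      obtain ⟨k', hk', Q', ⟨hQ', hxQ', hQ'Q⟩, hU⟩ := hY
      rw [mem_cone_iff]
      exact ⟨k', Q', ⟨hQ', hprop k' hk' Q' hQ' hxQ' hQ'Q, hQ'Q⟩, hU⟩
    calc gT G W β h M Q₀ x ≤ ∫⁻ Y in cone G W β Q₀ y, h Y ∂volume :=
          lintegral_mono' (Measure.restrict_mono hsub le_rfl) le_rfl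
      _ ≤ c := hy.2
  -- pointwise estimate on bad cubes
  have key2 : ∀ (j : ℤ) (S : Set (Amb n)), S ∈ G.Dk j → k₀ < j →
      ∀ (P : Set (Amb n)) (y : Amb n), P ∈ G.Dk (j - 1) → S ⊆ P → y ∈ P → y ∈ F →
      ∀ x ∈ S, gT G W β h M Q₀ x ≤ c + gT G W β h M S x := by
    intro j S hS hj P y hP hSP hyP hyF x hxS
    have hsub : coneT G W β M Q₀ x ⊆ cone G W β Q₀ y ∪ coneT G W β M S x := by
      intro Y hY
      rw [mem_coneT_iff] at hY
      obtain ⟨k', hk', Q', ⟨hQ', hxQ', hQ'Q⟩, hU⟩ := hY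
      rcases le_or_gt j k' with hjk | hkj
      · right
        rw [mem_coneT_iff]
        exact ⟨k', hk', Q', ⟨hQ', hxQ', Dk_subset G hjk hS hQ' hxQ' hxS⟩, hU⟩
      · left
        have hQ'S : S ⊆ Q' := Dk_subset G (by omega : k' ≤ j) hQ' hS hxS hxQ'
        have hPQ' : P ⊆ Q' := Dk_subset G (by omega : k' ≤ j - 1) hQ' hP (hSP hxS) (hQ'S hxS)
        rw [mem_cone_iff]
        exact ⟨k', Q', ⟨hQ', hPQ' hyP, hQ'Q⟩, hU⟩
    calc gT G W β h M Q₀ x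
        ≤ ∫⁻ Y in cone G W β Q₀ y ∪ coneT G W β M S x, h Y ∂volume :=
          lintegral_mono' (Measure.restrict_mono hsub le_rfl) le_rfl
      _ ≤ (∫⁻ Y in cone G W β Q₀ y, h Y ∂volume) + gT G W β h M S x := by
          rw [gT, ← lintegral_add_measure]
          exact lintegral_mono' (Measure.restrict_union_le _ _) le_rfl
      _ ≤ c + gT G W β h M S x := add_le_add_left hyF.2 _
  -- measurable version of the truncated square function and the good set
  obtain ⟨gm, hgm_meas, hgm_eq⟩ := gT_exists_measurable G W β h hdiam hk₀M hQ₀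
  set F' : Set (Amb n) := Q₀ ∩ {x | gm x ≤ c} with hF'
  have hF'meas : MeasurableSet F' :=
    (G.measurableSet k₀ Q₀ hQ₀).inter (measurableSet_le hgm_meas measurable_const)
  have hF'mem : ∀ x ∈ Q₀, gT G W β h M Q₀ x ≤ c → x ∈ F' := by
    intro x hx hle
    refine ⟨hx, ?_⟩
    simp only [Set.mem_setOf_eq]
    rw [← hgm_eq x hx]
    exact hle
  have hF'bound : ∀ x ∈ F', gT G W β h M Q₀ x ≤ c := by
    intro x hx
    rw [hgm_eq x hx.1]
    exact hx.2
  -- the bad regions and bad cubes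
  set B : ℤ → Set (Amb n) := fun j =>
    {x | x ∈ Q₀ ∧ (∃ S, S ∈ G.Dk j ∧ x ∈ S ∧ S ∩ F = ∅) ∧
      ∀ i : ℤ, k₀ < i → i < j → ∀ T ∈ G.Dk i, x ∈ T → (T ∩ F).Nonempty} with hB
  set Bad : ℤ → Set (Set (Amb n)) := fun j => {S | S ∈ G.Dk j ∧ (S ∩ B j).Nonempty} with hBadDef
  have hBdisj : ∀ j j' : ℤ, j < j' → k₀ < j → ∀ x, x ∈ B j → x ∈ B j' → False := by
    intro j j' hjj' hk₀j x hxj hxj'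
    obtain ⟨-, ⟨S, hS, hxS, hSF⟩, -⟩ := hxj
    obtain ⟨-, -, hmin⟩ := hxj'
    have hne := hmin j hk₀j hjj' S hS hxS
    rw [hSF] at hne
    exact Set.not_nonempty_empty hne
  have hBadfacts : ∀ j : ℤ, k₀ < j → ∀ S ∈ Bad j, S ∈ G.Dk j ∧ S ⊆ Q₀ ∧ S ∩ F = ∅ ∧ S ⊆ B j ∧
      ∃ P y, P ∈ G.Dk (j - 1) ∧ S ⊆ P ∧ y ∈ P ∧ y ∈ F := by
    intro j hj S hSBad
    obtain ⟨hS, x₀, hx₀S, hx₀B⟩ := hSBad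
    obtain ⟨hx₀Q₀, ⟨S', hS', hx₀S', hS'F⟩, hmin⟩ := hx₀B
    have hSS' : S = S' := Dk_eq G hS hS' hx₀S hx₀S'
    have hSF : S ∩ F = ∅ := by rw [hSS']; exact hS'F
    have hSQ₀ : S ⊆ Q₀ := Dk_subset G (le_of_lt hj) hQ₀ hS hx₀S hx₀Q₀
    have hSB : S ⊆ B j := by
      intro x' hx'S
      refine ⟨hSQ₀ hx'S, ⟨S, hS, hx'S, hSF⟩, ?_⟩
      intro i hik₀ hij T hT hx'T
      have hST : S ⊆ T := Dk_subset G (le_of_lt hij) hT hS hx'S hx'T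
      exact hmin i hik₀ hij T hT (hST hx₀S)
    obtain ⟨P, hP, hx₀P⟩ := Dk_exists G hdiam (j - 1) (G.subset_E k₀ Q₀ hQ₀ hx₀Q₀)
    have hSP : S ⊆ P := Dk_subset G (by omega) hP hS hx₀S hx₀P
    have hPF : (P ∩ F).Nonempty := by
      rcases eq_or_lt_of_le (by omega : k₀ ≤ j - 1) with heq | hlt
      · rw [← heq] at hP
        have hPQ : P = Q₀ := Dk_eq G hP hQ₀ hx₀P hx₀Q₀
        rw [hPQ]
        obtain ⟨y, hy⟩ := hFne
        exact ⟨y, hFsub hy, hy⟩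
      · exact hmin (j - 1) hlt (by omega) P hP hx₀P
    obtain ⟨y, hyP, hyF⟩ := hPF
    exact ⟨hS, hSQ₀, hSF, hSB, P, y, hP, hSP, hyP, hyF⟩
  set J : Set (ℤ × Set (Amb n)) := {q | k₀ < q.1 ∧ q.1 ≤ M ∧ q.2 ∈ Bad q.1} with hJ
  have hJc : J.Countable := by
    have hsub : J ⊆ ⋃ j ∈ Set.Ioc k₀ M, ({j} ×ˢ Bad j) := by
      intro q hq
      exact Set.mem_biUnion ⟨hq.1, hq.2.1⟩ (Set.mem_prod.2 ⟨rfl, hq.2.2⟩)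
    refine Set.Countable.mono hsub ?_
    refine Set.Countable.biUnion (Set.to_countable _) fun j hj => ?_
    refine (Set.countable_singleton j).prod ?_
    refine Set.Finite.countable (Set.Finite.subset (finite_subcubes G hQ₀ j) ?_)
    intro S hS
    exact ⟨hS.1, (hBadfacts j hj.1 S hS).2.1⟩
  haveI : Countable ↥J := hJc.to_subtype
  have hcover : Q₀ ⊆ F' ∪ ⋃ q : J, q.val.2 := by
    intro x hx
    by_cases hgc : gT G W β h M Q₀ x ≤ c
    · exact Or.inl (hF'mem x hx hgc)
    · right
      have hxE := G.subset_E k₀ Q₀ hQ₀ hx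
      by_cases hJem : ∃ j : ℤ, k₀ < j ∧ j ≤ M ∧ ∃ S, S ∈ G.Dk j ∧ x ∈ S ∧ S ∩ F = ∅
      · obtain ⟨j, hjP, hjmin⟩ := Int.exists_least_of_bdd
          ⟨k₀, fun z hz => le_of_lt hz.1⟩ hJem
        obtain ⟨hk₀j, hjM, S, hS, hxS, hSF⟩ := hjP
        have hxB : x ∈ B j := by
          refine ⟨hx, ⟨S, hS, hxS, hSF⟩, ?_⟩
          intro i hik₀ hij T hT hxT
          by_contra hTne
          rw [Set.not_nonempty_iff_eq_empty] at hTne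
          have hPi : k₀ < i ∧ i ≤ M ∧ ∃ S, S ∈ G.Dk i ∧ x ∈ S ∧ S ∩ F = ∅ :=
            ⟨hik₀, by omega, T, hT, hxT, hTne⟩
          have := hjmin i hPi
          omega
        have hq : (j, S) ∈ J := ⟨hk₀j, hjM, hS, ⟨x, hxS, hxB⟩⟩
        exact Set.mem_iUnion.2 ⟨⟨(j, S), hq⟩, hxS⟩
      · exfalso
        push_neg at hJem
        obtain ⟨S, hS, hxS⟩ := Dk_exists G hdiam M hxE
        have hSF : (S ∩ F).Nonempty := by
          rcases eq_or_lt_of_le hk₀M with heq | hlt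
          · rw [← heq] at hS
            have hSQ : S = Q₀ := Dk_eq G hS hQ₀ hxS hx
            rw [hSQ]
            obtain ⟨y, hy⟩ := hFne
            exact ⟨y, hFsub hy, hy⟩
          · exact hJem M hlt le_rfl S hS hxS
        obtain ⟨y, hyS, hyF⟩ := hSF
        apply hgc
        apply key1 y hyF x
        intro k' hk' Q' hQ' hxQ' hQ'Q
        exact Dk_subset G hk' hQ' hS hxS hxQ' hyS
  have hAsMble : ∀ q : J, MeasurableSet q.val.2 := fun q =>
    G.measurableSet q.val.1 q.val.2 q.2.2.2.1
  have hAsDisj : Pairwise (Function.onFun Disjoint fun q : J => q.val.2) := by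
    intro q q' hne
    rcases eq_or_ne q.val.1 q'.val.1 with heq | hneq
    · have hSne : q.val.2 ≠ q'.val.2 := by
        intro h2
        exact hne (Subtype.ext (Prod.ext heq h2))
      have hq'Dk : q'.val.2 ∈ G.Dk q.val.1 := by rw [heq]; exact q'.2.2.2.1
      exact Set.disjoint_iff_inter_eq_empty.mpr
        (G.pairwise_disj q.val.1 q.val.2 q.2.2.2.1 q'.val.2 hq'Dk hSne)
    · have hSB := (hBadfacts q.val.1 q.2.1 q.val.2 q.2.2.2).2.2.2.1
      have hSB' := (hBadfacts q'.val.1 q'.2.1 q'.val.2 q'.2.2.2).2.2.2.1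
      refine Set.disjoint_left.mpr fun {x} hxq hxq' => ?_
      rcases lt_or_gt_of_ne hneq with hlt | hgt
      · exact hBdisj _ _ hlt q.2.1 x (hSB hxq) (hSB' hxq')
      · exact hBdisj _ _ hgt q'.2.1 x (hSB' hxq') (hSB hxq)
  have hUsub : (⋃ q : J, q.val.2) ⊆
      {x ∈ Q₀ | c < ∫⁻ Y in cone G W β Q₀ x, h Y ∂volume} := by
    intro x hx
    obtain ⟨q, hxq⟩ := Set.mem_iUnion.1 hx
    obtain ⟨hS, hSQ₀, hSF, -, -⟩ := hBadfacts q.val.1 q.2.1 q.val.2 q.2.2.2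
    refine ⟨hSQ₀ hxq, ?_⟩
    by_contra hle
    have hxF : x ∈ F := ⟨hSQ₀ hxq, not_lt.1 hle⟩
    have hmem : x ∈ q.val.2 ∩ F := ⟨hxq, hxF⟩
    rw [hSF] at hmem
    exact hmem
  have htsum : ∑' q : J, σ q.val.2 ≤ ENNReal.ofReal (1 - β') * σ Q₀ := by
    refine le_trans ?_ (le_trans (measure_mono hUsub) hbad)
    exact MeasureTheory.tsum_meas_le_meas_iUnion_of_disjoint σ hAsMble hAsDisj
  have hper : ∀ q : J, ∫⁻ x in q.val.2, gT G W β h M Q₀ x ∂σ ≤ (c + CC) * σ q.val.2 := by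
    rintro ⟨⟨j, S⟩, hjk₀, hjM, hSBad⟩
    obtain ⟨hS, hSQ₀, hSF, hSB, P, y, hP, hSP, hyP, hyF⟩ := hBadfacts j hjk₀ S hSBad
    show ∫⁻ x in S, gT G W β h M Q₀ x ∂σ ≤ (c + CC) * σ S
    set e : ℕ := (M - j).toNat with he
    have heM : j + (e : ℤ) = M := by omega
    have helt : e < d := by omega
    have hIH := IH e helt j S hS
    rw [heM] at hIH
    calc ∫⁻ x in S, gT G W β h M Q₀ x ∂σ
        ≤ ∫⁻ x in S, (c + gT G W β h M S x) ∂σ :=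
          setLIntegral_mono' (G.measurableSet j S hS)
            (fun x hxS => key2 j S hS hjk₀ P y hP hSP hyP hyF x hxS)
      _ = c * σ S + ∫⁻ x in S, gT G W β h M S x ∂σ := by
          rw [lintegral_add_left measurable_const, setLIntegral_const]
      _ ≤ c * σ S + CC * σ S := add_le_add_right hIH _
      _ = (c + CC) * σ S := (add_mul c CC _).symm
  have hb0 : 0 ≤ (2 - β') / β' * lam :=
    mul_nonneg (div_nonneg (by linarith [hβ'.2]) hβ'.1.le) hlam.le
  have ht0 : 0 ≤ 1 - β' := by linarith [hβ'.2]
  have harith : c + (c + CC) * ENNReal.ofReal (1 - β') ≤ CC := by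
    rw [hc, hCC, ← ENNReal.ofReal_add hlam.le hb0,
      ← ENNReal.ofReal_mul (add_nonneg hlam.le hb0),
      ← ENNReal.ofReal_add hlam.le (mul_nonneg (add_nonneg hlam.le hb0) ht0)]
    apply ENNReal.ofReal_le_ofReal
    have hβ0 : β' ≠ 0 := ne_of_gt hβ'.1
    have hq : lam + (lam + (2 - β') / β' * lam) * (1 - β') = (2 - β') / β' * lam := by
      field_simp
      ring
    exact le_of_eq hq
  calc ∫⁻ x in Q₀, gT G W β h M Q₀ x ∂σ
      ≤ ∫⁻ x, gT G W β h M Q₀ x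
          ∂((σ.restrict F') + Measure.sum fun q : J => σ.restrict q.val.2) := by
        refine lintegral_mono' ?_ le_rfl
        calc σ.restrict Q₀
            ≤ σ.restrict (F' ∪ ⋃ q : J, q.val.2) := Measure.restrict_mono hcover le_rfl
          _ ≤ σ.restrict F' + σ.restrict (⋃ q : J, q.val.2) := Measure.restrict_union_le _ _
          _ ≤ _ := add_le_add_right Measure.restrict_iUnion_le _
    _ = (∫⁻ x in F', gT G W β h M Q₀ x ∂σ) +
        ∑' q : J, ∫⁻ x in q.val.2, gT G W β h M Q₀ x ∂σ := by
        rw [lintegral_add_measure, lintegral_sum_measure]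
    _ ≤ c * σ Q₀ + (c + CC) * (ENNReal.ofReal (1 - β') * σ Q₀) := by
        refine add_le_add ?_ ?_
        · calc ∫⁻ x in F', gT G W β h M Q₀ x ∂σ
              ≤ ∫⁻ _ in F', c ∂σ := setLIntegral_mono' hF'meas hF'bound
            _ = c * σ F' := setLIntegral_const _ _
            _ ≤ c * σ Q₀ := mul_le_mul_right (measure_mono Set.inter_subset_left) c
        · calc ∑' q : J, ∫⁻ x in q.val.2, gT G W β h M Q₀ x ∂σ
              ≤ ∑' q : J, (c + CC) * σ q.val.2 := ENNReal.tsum_le_tsum hper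
            _ = (c + CC) * ∑' q : J, σ q.val.2 := ENNReal.tsum_mul_left
            _ ≤ (c + CC) * (ENNReal.ofReal (1 - β') * σ Q₀) := mul_le_mul_right htsum _
    _ ≤ CC * σ Q₀ := by
        calc c * σ Q₀ + (c + CC) * (ENNReal.ofReal (1 - β') * σ Q₀)
            = (c + (c + CC) * ENNReal.ofReal (1 - β')) * σ Q₀ := by ring
          _ ≤ CC * σ Q₀ := mul_le_mul_left harith _

end GoodLambdaAux

theorem good_lambda_implies_uniform_carleson
    {n : ℕ} (hn : 1 ≤ n) {E : Set (Amb n)} {CE : ℝ} (hE : IsADR n E CE)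
    (G : DyadicGrid n E) (W : Whitney n E) {β : ℝ} (hβ : 0 < β)
    (hβne : ∀ k, ∀ Q ∈ G.Dk k, (whitneyIdx W β k Q).Nonempty)
    {ψ : Amb n → Amb n → ℂ} {α Cψ : ℝ} (hψ : KernelCond n E ψ α Cψ)
    (hEunb : ¬ Bornology.IsBounded E)
    {p N β' : ℝ} (hp : 1 < p) (hp2 : p ≤ 2) (hN : 0 < N) (hβ' : β' ∈ Set.Ioo (0 : ℝ) 1)
    (hdist : ∀ k, ∀ Q ∈ G.Dk k,
      sigmaE n E {x ∈ Q | ENNReal.ofReal N <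
          coneSq G W β ψ (fun _ => 1) Q x ^ (p / 2)} ≤
        ENNReal.ofReal (1 - β') * sigmaE n E Q) :
    ∀ k, ∀ Q ∈ G.Dk k,
      ∫⁻ x in Q, coneSq G W β ψ (fun _ => 1) Q x ∂(sigmaE n E) ≤
        ENNReal.ofReal ((2 - β') / β' * N ^ (2 / p)) * sigmaE n E Q := by
  intro k Q hQ
  classical
  have hdiam : EMetric.diam E = ⊤ := Metric.ediam_of_unbounded hEunb
  set h : Amb n → ℝ≥0∞ := fun Y =>
    (‖Theta n E ψ (fun _ => (1 : ℂ)) Y‖₊ : ℝ≥0∞) ^ 2 /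
      ENNReal.ofReal (del E Y ^ (n + 1)) with hh
  have hp0 : (0 : ℝ) < p := by linarith
  have hp0' : p ≠ 0 := ne_of_gt hp0
  set lam : ℝ := N ^ (2 / p) with hlam_def
  have hlam : 0 < lam := Real.rpow_pos_of_pos hN _
  have hconeSq : ∀ (Q' : Set (Amb n)) (x : Amb n),
      coneSq G W β ψ (fun _ => 1) Q' x = ∫⁻ Y in cone G W β Q' x, h Y ∂volume := by
    intro Q' x
    rw [hh]
    rfl
  have hlampow : lam ^ (p / 2) = N := by
    rw [hlam_def, ← Real.rpow_mul hN.le]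
    rw [show 2 / p * (p / 2) = 1 by field_simp, Real.rpow_one]
  have hNa : ENNReal.ofReal N = ENNReal.ofReal lam ^ (p / 2) := by
    rw [← hlampow, ENNReal.ofReal_rpow_of_pos hlam]
  have hp2pos : (0 : ℝ) < p / 2 := div_pos hp0 two_pos
  have hdist' : ∀ k', ∀ Q' ∈ G.Dk k',
      sigmaE n E {x ∈ Q' | ENNReal.ofReal lam < ∫⁻ Y in cone G W β Q' x, h Y ∂volume} ≤
        ENNReal.ofReal (1 - β') * sigmaE n E Q' := by
    intro k' Q' hQ'
    have hset : {x ∈ Q' | ENNReal.ofReal lam < ∫⁻ Y in cone G W β Q' x, h Y ∂volume} =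
        {x ∈ Q' | ENNReal.ofReal N < coneSq G W β ψ (fun _ => 1) Q' x ^ (p / 2)} := by
      ext x
      simp only [Set.mem_sep_iff, hconeSq]
      refine and_congr_right fun _ => ?_
      rw [hNa, ENNReal.rpow_lt_rpow_iff hp2pos]
    rw [hset]
    exact hdist k' Q' hQ'
  have hsup : ∀ x, coneSq G W β ψ (fun _ => 1) Q x = ⨆ d : ℕ, gT G W β h (k + d) Q x := by
    intro x
    rw [hconeSq, cone_eq_iUnion_coneT G W β k Q x]
    have hmono : Monotone fun d : ℕ => coneT G W β (k + d) Q x := fun d d' hdd =>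
      coneT_mono G W β (by omega : k + (d : ℤ) ≤ k + (d' : ℤ)) Q x
    exact setLIntegral_iUnion_of_directed _ hmono.directed_le
  have hmeas_int : ∀ d : ℕ, AEMeasurable (fun x => gT G W β h (k + d) Q x)
      ((sigmaE n E).restrict Q) := by
    intro d
    obtain ⟨g, hgmeas, hgeq⟩ :=
      gT_exists_measurable G W β h hdiam (by omega : k ≤ k + (d : ℤ)) hQ
    exact ⟨g, hgmeas,
      (ae_restrict_iff' (G.measurableSet k Q hQ)).2 (Filter.Eventually.of_forall hgeq)⟩
  calc ∫⁻ x in Q, coneSq G W β ψ (fun _ => 1) Q x ∂(sigmaE n E)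
      = ∫⁻ x in Q, ⨆ d : ℕ, gT G W β h (k + d) Q x ∂(sigmaE n E) :=
        lintegral_congr fun x => hsup x
    _ = ⨆ d : ℕ, ∫⁻ x in Q, gT G W β h (k + d) Q x ∂(sigmaE n E) :=
        lintegral_iSup' hmeas_int (Filter.Eventually.of_forall fun x d d' hdd =>
          gT_mono G W β h (by omega : k + (d : ℤ) ≤ k + (d' : ℤ)) Q x)
    _ ≤ ENNReal.ofReal ((2 - β') / β' * lam) * sigmaE n E Q :=
        iSup_le fun d => main_carleson G W β h hdiam hlam hβ' hdist' d k Q hQ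


end LocalTb
end
end

section
/- Small-scale kernel estimate: There exist constants C₂ ≥ 1 and C > 0, depending only on n, α, C₃ and the ADR, kernel, grid and Whitney constants, such that for all integers j, k with 2^{-j} ≤ C₂^{-1} 2^{-k}, every Q′ ∈ 𝔻_k, every x ∈ Q′, every Y ∈ U_{Q′}, and every w ∈ E: |∫_E ψ(Y,z) φ_j(z,w) dσ(z)| ≤ C 2^{-(j−k)α} · 2^{-kα} / (2^{-k} + |x−w|)^{n+α}. -/
open MeasureTheory Metric Set ENNReal NNReal

noncomputable section

namespace LocalTb

variable {n : ℕ} {E : Set (Amb n)}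

section Helpers

lemma mem_closedCube_self (c : Amb n) (m : ℤ) : c ∈ closedCube c m := by
  intro i; simp only [sub_self, abs_zero]; positivity

lemma closedCube_subset (c : Amb n) (m : ℤ) :
    closedCube c m ⊆ Metric.closedBall c (Real.sqrt (n+1) * ((2:ℝ)^(-m)/2)) := by
  intro Y hY
  rw [Metric.mem_closedBall, EuclideanSpace.dist_eq]
  have h1 : ∑ i, dist (Y i) (c i) ^ 2 ≤ (n+1 : ℝ) * ((2:ℝ)^(-m)/2)^2 := by
    calc ∑ i, dist (Y i) (c i) ^ 2 ≤ ∑ _i : Fin (n+1), ((2:ℝ)^(-m)/2)^2 := by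
          apply Finset.sum_le_sum
          intro i _
          have := hY i
          have h0 : dist (Y i) (c i) = |Y i - c i| := Real.dist_eq _ _
          nlinarith [abs_nonneg (Y i - c i)]
      _ = (n+1 : ℝ) * ((2:ℝ)^(-m)/2)^2 := by simp [Finset.sum_const]
  calc Real.sqrt (∑ i, dist (Y i) (c i) ^ 2) ≤ Real.sqrt ((n+1 : ℝ) * ((2:ℝ)^(-m)/2)^2) :=
        Real.sqrt_le_sqrt h1
    _ = Real.sqrt (n+1) * ((2:ℝ)^(-m)/2) := by
        rw [Real.sqrt_mul (by positivity), Real.sqrt_sq (by positivity)]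

lemma isCompact_closedCube (c : Amb n) (m : ℤ) : IsCompact (closedCube c m) := by
  have hclosed : IsClosed (closedCube c m) := by
    have : closedCube c m = ⋂ i, {Y : Amb n | |Y i - c i| ≤ (2:ℝ)^(-m)/2} := by
      ext Y; simp [closedCube, Set.mem_iInter]
    rw [this]
    refine isClosed_iInter fun i => ?_
    exact isClosed_le ((continuous_abs).comp
      ((EuclideanSpace.proj i).continuous.sub continuous_const)) continuous_const
  exact (isCompact_closedBall _ _).of_isClosed_subset hclosed (closedCube_subset c m)

lemma diam_closedCube_le (c : Amb n) (m : ℤ) :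
    Metric.diam (closedCube c m) ≤ Real.sqrt (n+1) * (2:ℝ)^(-m) := by
  calc Metric.diam (closedCube c m)
      ≤ Metric.diam (Metric.closedBall c (Real.sqrt (n+1) * ((2:ℝ)^(-m)/2))) :=
        Metric.diam_mono (closedCube_subset c m) isBounded_closedBall
    _ ≤ 2 * (Real.sqrt (n+1) * ((2:ℝ)^(-m)/2)) := Metric.diam_closedBall (by positivity)
    _ = Real.sqrt (n+1) * (2:ℝ)^(-m) := by ring

lemma side_le_diam_closedCube (c : Amb n) (m : ℤ) :
    (2:ℝ)^(-m) ≤ Metric.diam (closedCube c m) := by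
  set s := (2:ℝ)^(-m) with hs
  have hspos : (0:ℝ) < s := by positivity
  have h1 : c + EuclideanSpace.single 0 (s/2) ∈ closedCube c m := by
    intro i
    simp only [PiLp.add_apply, add_sub_cancel_left]
    rw [EuclideanSpace.single_apply]
    rcases eq_or_ne i 0 with h | h
    · rw [if_pos h, abs_of_pos (by positivity)]
    · rw [if_neg h]; simp; positivity
  have h2 : c - EuclideanSpace.single 0 (s/2) ∈ closedCube c m := by
    intro i
    simp only [PiLp.sub_apply, sub_sub_cancel_left, abs_neg]
    rw [EuclideanSpace.single_apply]
    rcases eq_or_ne i 0 with h | h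
    · rw [if_pos h, abs_of_pos (by positivity)]
    · rw [if_neg h]; simp; positivity
  have hd : dist (c + EuclideanSpace.single 0 (s/2))
      (c - EuclideanSpace.single (0 : Fin (n+1)) (s/2)) = s := by
    rw [dist_eq_norm]
    have : (c + EuclideanSpace.single 0 (s/2)) - (c - EuclideanSpace.single (0 : Fin (n+1)) (s/2))
        = EuclideanSpace.single (0 : Fin (n+1)) s := by
      ext i
      simp only [PiLp.sub_apply, PiLp.add_apply]
      rw [EuclideanSpace.single_apply, EuclideanSpace.single_apply]
      rcases eq_or_ne i 0 with h | h <;> simp [h]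
    rw [this, EuclideanSpace.norm_single]
    exact abs_of_pos hspos
  have hb : Bornology.IsBounded (closedCube c m) := (isCompact_closedCube c m).isBounded
  calc s = dist (c + EuclideanSpace.single 0 (s/2)) (c - EuclideanSpace.single (0:Fin (n+1)) (s/2)) := hd.symm
    _ ≤ Metric.diam (closedCube c m) := Metric.dist_le_diam_of_mem hb h1 h2

lemma setDist_le_infDist {A B : Set (Amb n)} {Y : Amb n} (hY : Y ∈ A) (hB : B.Nonempty) :
    setDist A B ≤ Metric.infDist Y B :=
  ENNReal.toReal_mono (Metric.infEdist_ne_top hB) (iInf₂_le Y hY)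

lemma infEdist_le_diam_add {A B : Set (Amb n)} {x : Amb n} (hx : x ∈ A) (hB : B.Nonempty) :
    EMetric.infEdist x B ≤ EMetric.diam A + ENNReal.ofReal (setDist A B) := by
  have hne : (⨅ a ∈ A, EMetric.infEdist a B) ≠ ⊤ :=
    ne_top_of_le_ne_top (Metric.infEdist_ne_top hB) (iInf₂_le x hx)
  have h1 : ENNReal.ofReal (setDist A B) = ⨅ a ∈ A, EMetric.infEdist a B := by
    rw [setDist]; exact ENNReal.ofReal_toReal hne
  have h2 : EMetric.infEdist x B ≤ EMetric.diam A + ⨅ a ∈ A, EMetric.infEdist a B := by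
    rw [iInf_subtype', ENNReal.add_iInf]
    refine le_iInf fun a => ?_
    calc EMetric.infEdist x B ≤ EMetric.infEdist (a : Amb n) B + edist x a :=
          EMetric.infEdist_le_infEdist_add_edist
      _ ≤ _ := by rw [add_comm (EMetric.diam A)]; exact add_le_add le_rfl (EMetric.edist_le_diam_of_mem hx a.2)
  exact h2.trans_eq (congrArg (fun z => EMetric.diam A + z) h1.symm)

end Helpers

theorem small_scale_kernel_estimate
    {n : ℕ} (hn : 1 ≤ n) {E : Set (Amb n)} {CE : ℝ} (hE : IsADR n E CE)
    (G : DyadicGrid n E) (W : Whitney n E) {β : ℝ} (hβ : 0 < β)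
    (hβne : ∀ k, ∀ Q ∈ G.Dk k, (whitneyIdx W β k Q).Nonempty)
    {ψ : Amb n → Amb n → ℂ} {α Cψ : ℝ} (hψ : KernelCond n E ψ α Cψ)
    (hEunb : ¬ Bornology.IsBounded E)
    {φ : ℤ → Amb n → Amb n → ℂ} {C₃ : ℝ} (hC₃ : 0 < C₃)
    (hφmeas : ∀ j, Measurable (Function.uncurry (φ j)))
    (hφsupp : ∀ j : ℤ, ∀ x y : Amb n, C₃ * (2 : ℝ) ^ (-j) ≤ dist x y → φ j x y = 0)
    (hφbdd : ∀ j : ℤ, ∀ x y : Amb n, ‖φ j x y‖ ≤ C₃ * (2 : ℝ) ^ ((j : ℝ) * n))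
    (hφmean : ∀ j : ℤ, ∀ y ∈ E, ∫ x, φ j x y ∂(sigmaE n E) = 0) :
    ∃ C₂ C : ℝ, 1 ≤ C₂ ∧ 0 < C ∧ ∀ j k : ℤ, (2 : ℝ) ^ (-j) ≤ C₂⁻¹ * (2 : ℝ) ^ (-k) →
      ∀ Q' ∈ G.Dk k, ∀ x ∈ Q', ∀ Y ∈ UQ W β k Q', ∀ w ∈ E,
        ‖∫ z, ψ Y z * φ j z w ∂(sigmaE n E)‖ ≤
          C * (2 : ℝ) ^ (-(((j : ℝ) - (k : ℝ)) * α)) * (2 : ℝ) ^ (-(k : ℝ) * α) /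
            ((2 : ℝ) ^ (-k) + dist x w) ^ ((n : ℝ) + α) := by
  obtain ⟨hα, hCψ, hψmeas, hψsize, hψhol⟩ := hψ
  have hEclosed : IsClosed E := hE.1
  have hCE1 : 1 ≤ CE := hE.2.1
  have hADR := hE.2.2
  have hCEpos : (0:ℝ) < CE := lt_of_lt_of_le one_pos hCE1
  have hEmeas : MeasurableSet E := hEclosed.measurableSet
  have hEne : E.Nonempty := by
    rcases E.eq_empty_or_nonempty with h | h
    · exact absurd (h ▸ Bornology.isBounded_empty) hEunb
    · exact h
  have hediam : EMetric.diam E = ⊤ := Metric.ediam_of_unbounded hEunb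
  have he : (0:ℝ) ≤ (n:ℝ) + α := add_nonneg (Nat.cast_nonneg n) hα.le
  set A : ℝ := G.C₁ + β + 8 * Real.sqrt (n+1) with hAdef
  have hApos : 0 < A := by
    have h1 := G.C₁_pos
    have h2 := Real.sqrt_nonneg ((n:ℝ)+1)
    rw [hAdef]; positivity
  set K : ℝ := 3 + 2 * A with hKdef
  have hKpos : 0 < K := by rw [hKdef]; linarith
  refine ⟨max 1 (8*C₃), Cψ * C₃ ^ α * C₃ * CE * (2*C₃)^n * K ^ ((n:ℝ)+α), le_max_left _ _, ?_, ?_⟩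
  · have h1 : (0:ℝ) < C₃ ^ α := Real.rpow_pos_of_pos hC₃ α
    have h2 : (0:ℝ) < K ^ ((n:ℝ)+α) := Real.rpow_pos_of_pos hKpos _
    have h3 : (0:ℝ) < (2*C₃)^n := by positivity
    exact mul_pos (mul_pos (mul_pos (mul_pos (mul_pos hCψ h1) hC₃) hCEpos) h3) h2
  intro j k hjk Q' hQ' x hx Y hYU w hw
  set s : ℝ := (2:ℝ)^(-k) with hsdef
  set t : ℝ := (2:ℝ)^(-j) with htdef
  have hspos : 0 < s := by rw [hsdef]; positivity
  have htpos : 0 < t := by rw [htdef]; positivity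
  have hrs : C₃ * t ≤ s / 8 := by
    have h8 : 8 * C₃ ≤ max 1 (8*C₃) := le_max_right _ _
    have hinv : (max 1 (8*C₃))⁻¹ ≤ (8*C₃)⁻¹ := inv_anti₀ (by positivity) h8
    calc C₃ * t ≤ C₃ * ((max 1 (8*C₃))⁻¹ * s) := mul_le_mul_of_nonneg_left hjk hC₃.le
      _ ≤ C₃ * ((8*C₃)⁻¹ * s) :=
          mul_le_mul_of_nonneg_left (mul_le_mul_of_nonneg_right hinv hspos.le) hC₃.le
      _ = s / 8 := by field_simp
  -- unpack the Whitney cube containing Y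
  simp only [UQ, Set.mem_iUnion] at hYU
  obtain ⟨p, hp, hYc⟩ := hYU
  simp only [whitneyIdx, Set.mem_setOf_eq, Set.mem_sep_iff] at hp
  obtain ⟨hpW, hm1, hm2, hpd⟩ := hp
  have hm_le : (2:ℝ)^(-p.2) ≤ 8 * s := by linarith
  have hm_ge : s / 8 ≤ (2:ℝ)^(-p.2) := by linarith
  have hcube_ne : (closedCube p.1 p.2).Nonempty := ⟨p.1, mem_closedCube_self _ _⟩
  -- distance to E from Y
  have hδY : s / 2 ≤ del E Y := by
    have h1 := W.dist_lower p hpW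
    have h2 := W.dist_mid p hpW
    have h3 := side_le_diam_closedCube p.1 p.2
    have h4 : setDist (closedCube p.1 p.2) E ≤ Metric.infDist Y E := setDist_le_infDist hYc hEne
    have h5 : del E Y = Metric.infDist Y E := rfl
    rw [h5]; linarith
  have hδYpos : 0 < del E Y := lt_of_lt_of_le (by positivity) hδY
  have hYnE : Y ∉ E := by
    intro hmem
    have h0 : del E Y = 0 := Metric.infDist_zero_of_mem hmem
    linarith
  have hDY : s / 2 ≤ dist Y w := le_trans hδY (Metric.infDist_le_dist_of_mem hw)
  have hDYpos : 0 < dist Y w := lt_of_lt_of_le (by positivity) hDY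
  -- distance from x to Y
  have hQ'diam : EMetric.diam Q' ≤ ENNReal.ofReal (G.C₁ * s) := (G.diam_bound k Q' hQ').2
  have hxI : EMetric.infEdist x (closedCube p.1 p.2) ≤ ENNReal.ofReal ((G.C₁ + β) * s) := by
    calc EMetric.infEdist x (closedCube p.1 p.2)
        ≤ EMetric.diam Q' + ENNReal.ofReal (setDist Q' (closedCube p.1 p.2)) :=
          infEdist_le_diam_add hx hcube_ne
      _ ≤ ENNReal.ofReal (G.C₁ * s) + ENNReal.ofReal (β * s) :=
          add_le_add hQ'diam (ENNReal.ofReal_le_ofReal hpd)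
      _ = ENNReal.ofReal ((G.C₁ + β) * s) := by
          rw [← ENNReal.ofReal_add (mul_nonneg G.C₁_pos.le hspos.le) (mul_nonneg hβ.le hspos.le)]
          congr 1; ring
  have hxIdist : Metric.infDist x (closedCube p.1 p.2) ≤ (G.C₁ + β) * s := by
    have h := ENNReal.toReal_mono ENNReal.ofReal_ne_top hxI
    rwa [ENNReal.toReal_ofReal (mul_nonneg (by linarith [G.C₁_pos, hβ]) hspos.le)] at h
  have hxY : dist x Y ≤ A * s := by
    obtain ⟨y₀, hy₀, heq⟩ := (isCompact_closedCube p.1 p.2).exists_infDist_eq_dist hcube_ne x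
    have h1 : dist x y₀ ≤ (G.C₁ + β) * s := heq ▸ hxIdist
    have h2 : dist y₀ Y ≤ Real.sqrt (n+1) * (2:ℝ)^(-p.2) :=
      le_trans (Metric.dist_le_diam_of_mem (isCompact_closedCube p.1 p.2).isBounded hy₀ hYc)
        (diam_closedCube_le _ _)
    have h3 : Real.sqrt (n+1) * (2:ℝ)^(-p.2) ≤ Real.sqrt (n+1) * (8*s) :=
      mul_le_mul_of_nonneg_left hm_le (Real.sqrt_nonneg _)
    calc dist x Y ≤ dist x y₀ + dist y₀ Y := dist_triangle _ _ _
      _ ≤ (G.C₁+β)*s + Real.sqrt (n+1)*(8*s) := by linarith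
      _ = A * s := by rw [hAdef]; ring
  have hKDY : s + dist x w ≤ K * dist Y w := by
    have h1 : dist x w ≤ dist x Y + dist Y w := dist_triangle _ _ _
    have h2 : A * s ≤ A * (2 * dist Y w) :=
      mul_le_mul_of_nonneg_left (by linarith) hApos.le
    rw [hKdef]; nlinarith
  -- analytic part
  set r : ℝ := C₃ * t with hrdef
  have hrpos : 0 < r := by rw [hrdef]; exact mul_pos hC₃ htpos
  set cb := Metric.closedBall w r with hcbdef
  have hcbmeas : MeasurableSet cb := measurableSet_closedBall
  have hball : sigmaE n E (Metric.ball w (2*r)) ≤ ENNReal.ofReal (CE * (2*r)^n) :=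
    (hADR w hw (2*r) (by linarith) (by rw [hediam]; exact ENNReal.ofReal_lt_top)).2
  have hfin : sigmaE n E cb < ⊤ :=
    lt_of_le_of_lt (le_trans (measure_mono (Metric.closedBall_subset_ball (by linarith))) hball)
      ENNReal.ofReal_lt_top
  have hgmeas : Measurable (fun z => φ j z w) := (hφmeas j).comp (measurable_id.prodMk measurable_const)
  have hψYmeas : Measurable (fun z => ψ Y z) := hψmeas.comp (measurable_const.prodMk measurable_id)
  have hφnorm : ∀ z, ‖φ j z w‖ ≤ C₃ * (2:ℝ)^((j:ℝ)*(n:ℝ)) := fun z => by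
    exact hφbdd j z w
  have hφzero : ∀ z, z ∉ cb → φ j z w = 0 := by
    intro z hz
    apply hφsupp
    have h1 : r < dist z w := lt_of_not_ge (fun h => hz (Metric.mem_closedBall.mpr h))
    have h2 : C₃*(2:ℝ)^(-j) = r := by rw [hrdef, htdef]
    linarith
  set Mφ : ℝ := C₃ * (2:ℝ)^((j:ℝ)*(n:ℝ)) with hMφdef
  have hMφpos : 0 < Mφ := by
    rw [hMφdef]; exact mul_pos hC₃ (Real.rpow_pos_of_pos (by norm_num) _)
  have hgbd : ∀ z, ‖φ j z w‖ ≤ cb.indicator (fun _ => Mφ) z := by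
    intro z; by_cases hz : z ∈ cb
    · rw [Set.indicator_of_mem hz]; exact hφnorm z
    · rw [Set.indicator_of_notMem hz, hφzero z hz]; simp
  have hindint : ∀ M : ℝ, Integrable (cb.indicator fun _ => M) (sigmaE n E) := fun M => by
    rw [integrable_indicator_iff hcbmeas]
    exact integrableOn_const hfin.ne
  have hgint : Integrable (fun z => φ j z w) (sigmaE n E) :=
    (hindint Mφ).mono' hgmeas.aestronglyMeasurable (ae_of_all _ hgbd)
  set Mψ : ℝ := Cψ * del E Y ^ α / del E Y ^ ((n:ℝ)+α) with hMψdef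
  have hMψpos : 0 < Mψ := by
    rw [hMψdef]
    exact div_pos (mul_pos hCψ (Real.rpow_pos_of_pos hδYpos _)) (Real.rpow_pos_of_pos hδYpos _)
  have hψYbd : ∀ z ∈ E, ‖ψ Y z‖ ≤ Mψ := by
    intro z hz
    refine le_trans (hψsize Y hYnE z hz) ?_
    have hd : del E Y ≤ dist Y z := Metric.infDist_le_dist_of_mem hz
    rw [hMψdef]
    gcongr
  have hae_mem : ∀ᵐ z ∂(sigmaE n E), z ∈ E := ae_restrict_mem hEmeas
  have hhbd : ∀ᵐ z ∂(sigmaE n E), ‖ψ Y z * φ j z w‖ ≤ cb.indicator (fun _ => Mψ * Mφ) z := by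
    filter_upwards [hae_mem] with z hz
    by_cases hzcb : z ∈ cb
    · rw [Set.indicator_of_mem hzcb, norm_mul]
      exact mul_le_mul (hψYbd z hz) (hgbd z |>.trans (by rw [Set.indicator_of_mem hzcb]))
        (norm_nonneg _) hMψpos.le
    · rw [Set.indicator_of_notMem hzcb, hφzero z hzcb]; simp
  have hhint : Integrable (fun z => ψ Y z * φ j z w) (sigmaE n E) :=
    (hindint (Mψ * Mφ)).mono' (hψYmeas.mul hgmeas).aestronglyMeasurable hhbd
  have hgint' : Integrable (fun z => ψ Y w * φ j z w) (sigmaE n E) := hgint.const_mul _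
  have hfuneq : (fun z => (ψ Y z - ψ Y w) * φ j z w)
      = fun z => ψ Y z * φ j z w - ψ Y w * φ j z w := funext fun z => by ring
  have hh'int : Integrable (fun z => (ψ Y z - ψ Y w) * φ j z w) (sigmaE n E) := by
    rw [hfuneq]; exact hhint.sub hgint'
  have hsplit : ∫ z, ψ Y z * φ j z w ∂(sigmaE n E)
      = ∫ z, (ψ Y z - ψ Y w) * φ j z w ∂(sigmaE n E) := by
    have h0 : ∫ z, φ j z w ∂(sigmaE n E) = 0 := hφmean j w hw
    have hsub : ∫ z, (ψ Y z - ψ Y w) * φ j z w ∂(sigmaE n E)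
        = ∫ z, ψ Y z * φ j z w ∂(sigmaE n E) - ∫ z, ψ Y w * φ j z w ∂(sigmaE n E) := by
      rw [hfuneq]; exact integral_sub hhint hgint'
    rw [hsub, integral_const_mul, h0, mul_zero, sub_zero]
  set M' : ℝ := Cψ * r ^ α / dist Y w ^ ((n:ℝ)+α) with hM'def
  have hM'pos : 0 < M' := by
    rw [hM'def]
    exact div_pos (mul_pos hCψ (Real.rpow_pos_of_pos hrpos _)) (Real.rpow_pos_of_pos hDYpos _)
  have hholbd : ∀ᵐ z ∂(sigmaE n E),
      ‖(ψ Y z - ψ Y w) * φ j z w‖ ≤ cb.indicator (fun _ => M' * Mφ) z := by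
    filter_upwards [hae_mem] with z hz
    by_cases hzcb : z ∈ cb
    · rw [Set.indicator_of_mem hzcb, norm_mul]
      have hdzw : dist z w ≤ r := Metric.mem_closedBall.mp hzcb
      have hdwz : dist w z ≤ r := by rw [dist_comm]; exact hdzw
      have hrs' : r ≤ s / 8 := by rw [hrdef]; exact hrs
      have hpre : 2 * dist w z ≤ dist Y w := by linarith
      have h1 : ‖ψ Y z - ψ Y w‖ ≤ Cψ * dist w z ^ α / dist Y w ^ ((n:ℝ)+α) := by
        rw [norm_sub_rev]
        exact hψhol Y hYnE w hw z hz hpre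
      have h2 : Cψ * dist w z ^ α / dist Y w ^ ((n:ℝ)+α) ≤ M' := by
        rw [hM'def]
        gcongr
      exact mul_le_mul (le_trans h1 h2) (hφnorm z) (norm_nonneg _) hM'pos.le
    · rw [Set.indicator_of_notMem hzcb, hφzero z hzcb]; simp
  have hnormint : ‖∫ z, (ψ Y z - ψ Y w) * φ j z w ∂(sigmaE n E)‖
      ≤ (sigmaE n E cb).toReal * (M' * Mφ) := by
    calc ‖∫ z, (ψ Y z - ψ Y w) * φ j z w ∂(sigmaE n E)‖
        ≤ ∫ z, ‖(ψ Y z - ψ Y w) * φ j z w‖ ∂(sigmaE n E) := norm_integral_le_integral_norm _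
      _ ≤ ∫ z, cb.indicator (fun _ => M' * Mφ) z ∂(sigmaE n E) :=
          integral_mono_ae hh'int.norm (hindint _) hholbd
      _ = (sigmaE n E cb).toReal * (M' * Mφ) := by
          rw [integral_indicator_const _ hcbmeas]; simp [smul_eq_mul, Measure.real]
  have hcbmeasure : (sigmaE n E cb).toReal ≤ CE * (2*r)^n :=
    ENNReal.toReal_le_of_le_ofReal (mul_nonneg hCEpos.le (pow_nonneg (by linarith) n))
      (le_trans (measure_mono (Metric.closedBall_subset_ball (by linarith))) hball)
  have hfinal1 : ‖∫ z, ψ Y z * φ j z w ∂(sigmaE n E)‖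
      ≤ (CE*(2*r)^n) * (M' * Mφ) := by
    rw [hsplit]
    exact le_trans hnormint
      (mul_le_mul_of_nonneg_right hcbmeasure (mul_nonneg hM'pos.le hMφpos.le))
  -- algebraic identities
  have hrα : r ^ α = C₃ ^ α * t ^ α := by rw [hrdef]; exact Real.mul_rpow hC₃.le htpos.le
  have h2rn : (2*r)^n = (2*C₃)^n * t^n := by
    rw [hrdef, show (2:ℝ)*(C₃*t) = (2*C₃)*t by ring, mul_pow]
  have honeaux : (2:ℝ)^((j:ℝ)*(n:ℝ)) * t^n = 1 := by
    rw [htdef]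
    have e1 : (2:ℝ)^((j:ℝ)*(n:ℝ)) = (2:ℝ)^((j*(n:ℤ)) : ℤ) := by
      rw [← Real.rpow_intCast 2 (j*(n:ℤ))]; congr 1; push_cast; ring
    have e2 : ((2:ℝ)^(-j))^(n:ℕ) = (2:ℝ)^((-j)*(n:ℤ)) := by
      rw [← zpow_natCast ((2:ℝ)^(-j)) n, ← zpow_mul]
    rw [e1, e2, ← zpow_add₀ (by norm_num : (2:ℝ) ≠ 0),
      show j*(n:ℤ) + (-j)*(n:ℤ) = 0 by ring, zpow_zero]
  have htα : (2:ℝ)^(-(((j:ℝ)-(k:ℝ))*α)) * (2:ℝ)^(-(k:ℝ)*α) = t ^ α := by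
    rw [← Real.rpow_add (by norm_num : (0:ℝ) < 2),
      show -(((j:ℝ)-(k:ℝ))*α) + (-(k:ℝ)*α) = (-(j:ℝ))*α by ring,
      Real.rpow_mul (by norm_num : (0:ℝ) ≤ 2)]
    congr 1
    rw [htdef, ← Real.rpow_intCast 2 (-j)]
    congr 1; push_cast; ring
  have hsDpos : (0:ℝ) < s + dist x w := lt_of_lt_of_le hspos (le_add_of_nonneg_right dist_nonneg)
  have hKe : (s + dist x w)^((n:ℝ)+α) ≤ K^((n:ℝ)+α) * dist Y w^((n:ℝ)+α) := by
    rw [← Real.mul_rpow hKpos.le dist_nonneg]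
    exact Real.rpow_le_rpow hsDpos.le hKDY he
  have hsD_pos : 0 < (s + dist x w)^((n:ℝ)+α) := Real.rpow_pos_of_pos hsDpos _
  have hDYe_pos : 0 < dist Y w ^ ((n:ℝ)+α) := Real.rpow_pos_of_pos hDYpos _
  set B : ℝ := Cψ * C₃ ^ α * C₃ * CE * (2*C₃)^n with hBdef
  have hBpos : 0 < B := by
    rw [hBdef]
    exact mul_pos (mul_pos (mul_pos (mul_pos hCψ (Real.rpow_pos_of_pos hC₃ α)) hC₃) hCEpos)
      (by positivity)
  have hP1 : (CE*(2*r)^n) * (M' * Mφ) = B * t ^ α / dist Y w ^ ((n:ℝ)+α) := by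
    have hP : (CE*(2*r)^n) * (M' * Mφ)
        = B * t ^ α * ((2:ℝ)^((j:ℝ)*(n:ℝ)) * t^n) / dist Y w ^ ((n:ℝ)+α) := by
      rw [hM'def, hMφdef, hrα, h2rn, hBdef]; ring
    rw [hP, honeaux, mul_one]
  have hcmp : B * t ^ α / dist Y w ^ ((n:ℝ)+α)
      ≤ B * K^((n:ℝ)+α) * t ^ α / (s + dist x w)^((n:ℝ)+α) := by
    rw [div_le_div_iff₀ hDYe_pos hsD_pos]
    calc B * t^α * (s + dist x w)^((n:ℝ)+α)
        ≤ B * t^α * (K^((n:ℝ)+α) * dist Y w^((n:ℝ)+α)) :=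
          mul_le_mul_of_nonneg_left hKe
            (mul_nonneg hBpos.le (Real.rpow_pos_of_pos htpos α).le)
      _ = B * K^((n:ℝ)+α) * t^α * dist Y w^((n:ℝ)+α) := by ring
  calc ‖∫ z, ψ Y z * φ j z w ∂(sigmaE n E)‖ ≤ (CE*(2*r)^n) * (M' * Mφ) := hfinal1
    _ = B * t ^ α / dist Y w ^ ((n:ℝ)+α) := hP1
    _ ≤ B * K^((n:ℝ)+α) * t ^ α / (s + dist x w)^((n:ℝ)+α) := hcmp
    _ = Cψ * C₃ ^ α * C₃ * CE * (2*C₃)^n * K ^ ((n:ℝ)+α) * (2:ℝ)^(-(((j:ℝ)-(k:ℝ))*α))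
        * (2:ℝ)^(-(k:ℝ)*α) / (s + dist x w)^((n:ℝ)+α) := by
      rw [← htα, hBdef]; ring


end LocalTb
end
end

section
/- From sawtooth bounds to a distributional inequality: Assume E is unbounded and fix p ∈ (1,2]. Suppose there exist η ∈ (0,1) and C₁ > 0 such that for every Q ∈ 𝔻 there is a family ℱ = {Q_k} of dyadic subcubes of Q with Σ_k σ(Q_k) ≤ (1−η) σ(Q) and ∫_Q (∬_{γ_Q(x)} |Θ1(Y)|² dY / δ(Y)^{n+1})^{p/2} dσ(x) ≤ C₁ σ(Q), where γ_Q is formed with this family ℱ. Then there exists N > 0, depending only on η and C₁, such that for every Q ∈ 𝔻: σ({x ∈ Q : (∬_{Γ_Q(x)} |Θ1(Y)|² dY / δ(Y)^{n+1})^{p/2} > N}) ≤ (1 − η/2) σ(Q). -/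
open MeasureTheory Metric Set ENNReal NNReal

noncomputable section

namespace LocalTb

variable {n : ℕ} {E : Set (Amb n)}

section Aux

lemma ediam_top_of_unbounded (hEunb : ¬ Bornology.IsBounded E) : EMetric.diam E = ⊤ := by
  by_contra h
  exact hEunb (Metric.isBounded_iff_ediam_ne_top.mpr h)

lemma sigmaFinite_sigmaE {CE : ℝ} (hE : IsADR n E CE)
    (hEunb : ¬ Bornology.IsBounded E) : SigmaFinite (sigmaE n E) := by
  constructor
  refine ⟨⟨fun m => ball (0 : Amb n) (m + 1), fun _ => trivial, ?_, ?_⟩⟩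
  · intro m
    rcases (E ∩ ball (0 : Amb n) (m + 1)).eq_empty_or_nonempty with h | ⟨x, hxE, hxb⟩
    · have h0 : sigmaE n E (ball (0 : Amb n) (m + 1)) = 0 := by
        rw [sigmaE, Measure.restrict_apply measurableSet_ball, Set.inter_comm, h]
        simp
      simp [h0]
    · have hsub : ball (0 : Amb n) (m + 1) ⊆ ball x (2 * (m + 1)) := by
        intro y hy
        have hx : dist x (0 : Amb n) < m + 1 := mem_ball.mp hxb
        have hy' : dist y (0 : Amb n) < m + 1 := mem_ball.mp hy
        have htri := dist_triangle y (0 : Amb n) x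
        rw [mem_ball]
        rw [dist_comm] at hx
        linarith
      have hr : (0 : ℝ) < 2 * (m + 1) := by positivity
      have hb := hE.2.2 x hxE _ hr
        (by rw [ediam_top_of_unbounded hEunb]; exact ENNReal.ofReal_lt_top)
      calc sigmaE n E (ball (0 : Amb n) (m + 1))
          ≤ sigmaE n E (ball x (2 * (m + 1))) := measure_mono hsub
        _ ≤ ENNReal.ofReal (CE * (2 * (m + 1)) ^ n) := hb.2
        _ < ⊤ := ENNReal.ofReal_lt_top
  · exact iUnion_ball_nat_succ (0 : Amb n)

lemma countable_Dk {CE : ℝ} (hE : IsADR n E CE) (hEunb : ¬ Bornology.IsBounded E)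
    (G : DyadicGrid n E) (k : ℤ) : (G.Dk k).Countable := by
  have := sigmaFinite_sigmaE hE hEunb
  have key := MeasureTheory.Measure.countable_meas_pos_of_disjoint_iUnion
    (μ := sigmaE n E) (As := fun Q : G.Dk k => (Q : Set (Amb n)))
    (fun Q => G.measurableSet k Q Q.2) ?_
  · have huniv : {i : G.Dk k | 0 < sigmaE n E (i : Set (Amb n))} = Set.univ := by
      ext Q
      simp only [Set.mem_setOf_eq, Set.mem_univ, iff_true]
      refine lt_of_lt_of_le ?_ (G.meas_bound k Q Q.2).1
      refine ENNReal.ofReal_pos.mpr ?_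
      have h1 : (0:ℝ) < G.C₁⁻¹ := inv_pos.mpr G.C₁_pos
      have h2 : (0:ℝ) < (2:ℝ) ^ (-(k * (n:ℤ))) := zpow_pos (by norm_num) _
      positivity
    rw [huniv, Set.countable_univ_iff] at key
    exact Set.countable_coe_iff.mpr key
  · intro Q Q' hne
    have h : (Q : Set (Amb n)) ∩ Q' = ∅ :=
      G.pairwise_disj k Q Q.2 Q' Q'.2 (fun h => hne (Subtype.ext h))
    exact Set.disjoint_iff_inter_eq_empty.mpr h

lemma isClosed_closedCube (c : Amb n) (m : ℤ) : IsClosed (closedCube c m) := by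
  have h : closedCube c m =
      ⋂ i, (fun Y : Amb n => Y i) ⁻¹' (Metric.closedBall (c i) ((2:ℝ)^(-m)/2)) := by
    ext Y
    simp [closedCube, Real.dist_eq, Set.mem_iInter]
  rw [h]
  refine isClosed_iInter fun i => IsClosed.preimage ?_ Metric.isClosed_closedBall
  exact (EuclideanSpace.proj (𝕜 := ℝ) i).continuous

lemma volume_interior_closedCube_pos (c : Amb n) (m : ℤ) :
    0 < volume (interior (closedCube c m)) := by
  set s : ℝ := (2:ℝ)^(-m)/2 with hs
  have hspos : 0 < s := by positivity
  set O : Set (Amb n) := ⋂ i, (fun Y : Amb n => Y i) ⁻¹' (Metric.ball (c i) s) with hO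
  have hOopen : IsOpen O := isOpen_iInter_of_finite fun i =>
    IsOpen.preimage (EuclideanSpace.proj (𝕜 := ℝ) i).continuous Metric.isOpen_ball
  have hcO : c ∈ O := by
    simp only [hO, Set.mem_iInter, Set.mem_preimage, Metric.mem_ball, dist_self]
    exact fun _ => hspos
  have hsub : O ⊆ closedCube c m := by
    intro Y hY i
    have h := Set.mem_iInter.mp hY i
    simp only [Set.mem_preimage, Metric.mem_ball, Real.dist_eq] at h
    exact le_of_lt h
  have hsubint : O ⊆ interior (closedCube c m) := hOopen.subset_interior_iff.mpr hsub
  exact (hOopen.measure_pos volume ⟨c, hcO⟩).trans_le (measure_mono hsubint)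

lemma countable_whitney (W : Whitney n E) : W.cubes.Countable := by
  have key := MeasureTheory.Measure.countable_meas_pos_of_disjoint_iUnion
    (μ := (volume : Measure (Amb n)))
    (As := fun p : W.cubes => interior (closedCube p.1.1 p.1.2))
    (fun p => isOpen_interior.measurableSet) ?_
  · have huniv : {i : W.cubes | 0 < volume (interior (closedCube i.1.1 i.1.2))} = Set.univ := by
      ext p
      simp [volume_interior_closedCube_pos]
    rw [huniv, Set.countable_univ_iff] at key
    exact Set.countable_coe_iff.mpr key
  · intro p q hne
    have h : interior (closedCube p.1.1 p.1.2) ∩ interior (closedCube q.1.1 q.1.2) = ∅ :=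
      W.disj_int p.1 p.2 q.1 q.2 (fun h => hne (Subtype.ext h))
    exact Set.disjoint_iff_inter_eq_empty.mpr h

lemma measurableSet_UQ (W : Whitney n E) (hWc : W.cubes.Countable) (β : ℝ) (k : ℤ)
    (Q : Set (Amb n)) : MeasurableSet (UQ W β k Q) :=
  MeasurableSet.biUnion (hWc.mono fun p hp => hp.1) fun p _ =>
    (isClosed_closedCube p.1 p.2).measurableSet

lemma measurable_theta_one {ψ : Amb n → Amb n → ℂ}
    (hψm : Measurable (Function.uncurry ψ)) [SFinite (sigmaE n E)] :
    Measurable (Theta n E ψ (fun _ => 1)) := by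
  have h := (hψm.stronglyMeasurable.integral_prod_right' (ν := sigmaE n E)).measurable
  have heq : (Theta n E ψ (fun _ => 1)) =
      fun X => ∫ y, (Function.uncurry ψ) (X, y) ∂(sigmaE n E) := by
    funext X
    simp [Theta, Function.uncurry]
  rw [heq]
  exact h

lemma measurable_hker {ψ : Amb n → Amb n → ℂ}
    (hψm : Measurable (Function.uncurry ψ)) [SFinite (sigmaE n E)] :
    Measurable (fun Y => (‖Theta n E ψ (fun _ => 1) Y‖₊ : ℝ≥0∞) ^ 2 /
      ENNReal.ofReal (del E Y ^ (n + 1))) := by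
  have h1 := ((measurable_theta_one (E := E) hψm).nnnorm.coe_nnreal_ennreal).pow_const 2
  have hdel : Measurable (del E) := (continuous_infDist_pt E).measurable
  have h2 : Measurable fun Y : Amb n => ENNReal.ofReal (del E Y ^ (n + 1)) :=
    ENNReal.measurable_ofReal.comp (hdel.pow_const (n+1))
  exact h1.div h2

lemma goodCone_sections (G : DyadicGrid n E) (W : Whitney n E) (β : ℝ)
    (F : Set (Set (Amb n) × ℤ)) (Q : Set (Amb n)) (x : Amb n) :
    goodCone G W β F Q x =
      Prod.mk x ⁻¹' (⋃ (k' : ℤ), ⋃ Q' ∈ {Q' ∈ G.Dk k' | Q' ⊆ Q ∧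
        ∀ q ∈ F, (Q' ∩ q.1).Nonempty → (2 : ℝ) ^ (-q.2) < (2 : ℝ) ^ (-k')},
        Q' ×ˢ UQ W β k' Q') := by
  ext Y
  simp only [goodCone, Set.mem_preimage, Set.mem_iUnion, Set.mem_setOf_eq,
    Set.mem_prod, exists_prop]
  constructor
  · rintro ⟨k', Q', ⟨h1, h2, h3, h4⟩, hY⟩
    exact ⟨k', Q', ⟨h1, h3, h4⟩, h2, hY⟩
  · rintro ⟨k', Q', ⟨h1, h3, h4⟩, h2, hY⟩
    exact ⟨k', Q', ⟨h1, h2, h3, h4⟩, hY⟩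

lemma measurable_goodConeSq {CE : ℝ} (hE : IsADR n E CE)
    (hEunb : ¬ Bornology.IsBounded E) (G : DyadicGrid n E) (W : Whitney n E)
    (β : ℝ) {ψ : Amb n → Amb n → ℂ} (hψm : Measurable (Function.uncurry ψ))
    (F : Set (Set (Amb n) × ℤ)) (Q : Set (Amb n)) :
    Measurable (fun x => goodConeSq G W β ψ F (fun _ => 1) Q x) := by
  haveI hσ : SigmaFinite (sigmaE n E) := sigmaFinite_sigmaE hE hEunb
  have hWc := countable_whitney W
  set A : Set (Amb n × Amb n) := ⋃ (k' : ℤ), ⋃ Q' ∈ {Q' ∈ G.Dk k' | Q' ⊆ Q ∧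
      ∀ q ∈ F, (Q' ∩ q.1).Nonempty → (2 : ℝ) ^ (-q.2) < (2 : ℝ) ^ (-k')},
      Q' ×ˢ UQ W β k' Q' with hA
  have hAm : MeasurableSet A := by
    refine MeasurableSet.iUnion fun k' => MeasurableSet.biUnion
      (((countable_Dk hE hEunb G k')).mono fun Q' hQ' => hQ'.1) fun Q' hQ' =>
      (G.measurableSet k' Q' hQ'.1).prod (measurableSet_UQ W hWc β k' Q')
  have hh := measurable_hker (E := E) hψm
  have key : (fun x => goodConeSq G W β ψ F (fun _ => 1) Q x) =
      fun x => ∫⁻ Y, A.indicator (fun p => (‖Theta n E ψ (fun _ => 1) p.2‖₊ : ℝ≥0∞) ^ 2 /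
        ENNReal.ofReal (del E p.2 ^ (n + 1))) (x, Y) ∂volume := by
    funext x
    rw [goodConeSq, goodCone_sections, ← hA,
      ← lintegral_indicator (hAm.preimage measurable_prodMk_left)]
    congr 1
  rw [key]
  exact ((hh.comp measurable_snd).indicator hAm).lintegral_prod_right'

end Aux

theorem sawtooth_to_distributional
    {n : ℕ} (hn : 1 ≤ n) {E : Set (Amb n)} {CE : ℝ} (hE : IsADR n E CE)
    (G : DyadicGrid n E) (W : Whitney n E) {β : ℝ} (hβ : 0 < β)
    (hβne : ∀ k, ∀ Q ∈ G.Dk k, (whitneyIdx W β k Q).Nonempty)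
    {ψ : Amb n → Amb n → ℂ} {α Cψ : ℝ} (hψ : KernelCond n E ψ α Cψ)
    (hEunb : ¬ Bornology.IsBounded E)
    {η C₁' p : ℝ} (hη : η ∈ Set.Ioo (0 : ℝ) 1) (hC₁' : 0 < C₁')
    (hp : 1 < p) (hp2 : p ≤ 2)
    (hF : ∀ k, ∀ Q ∈ G.Dk k, ∃ F : Set (Set (Amb n) × ℤ),
      (∀ q ∈ F, q.1 ∈ G.Dk q.2 ∧ q.1 ⊆ Q) ∧
      (∑' q : F, sigmaE n E q.val.1) ≤ ENNReal.ofReal (1 - η) * sigmaE n E Q ∧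
      ∫⁻ x in Q, goodConeSq G W β ψ F (fun _ => 1) Q x ^ (p / 2) ∂(sigmaE n E) ≤
        ENNReal.ofReal C₁' * sigmaE n E Q) :
    ∃ N : ℝ, 0 < N ∧ ∀ k, ∀ Q ∈ G.Dk k,
      sigmaE n E {x ∈ Q | ENNReal.ofReal N <
          coneSq G W β ψ (fun _ => 1) Q x ^ (p / 2)} ≤
        ENNReal.ofReal (1 - η / 2) * sigmaE n E Q := by
  obtain ⟨hη0, hη1⟩ := hη
  haveI hσ : SigmaFinite (sigmaE n E) := sigmaFinite_sigmaE hE hEunb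
  have hDkc : ∀ k, (G.Dk k).Countable := countable_Dk hE hEunb G
  refine ⟨2 * C₁' / η, by positivity, ?_⟩
  intro k Q hQ
  obtain ⟨F, hF1, hF2, hF3⟩ := hF k Q hQ
  set N : ℝ := 2 * C₁' / η with hN
  have hNpos : 0 < N := by positivity
  have hQfin : sigmaE n E Q ≠ ⊤ := ((G.meas_bound k Q hQ).2.trans_lt ENNReal.ofReal_lt_top).ne
  have hQmeas : MeasurableSet Q := G.measurableSet k Q hQ
  -- F is countable
  have hFc : F.Countable := by
    have hsub : F ⊆ ⋃ m : ℤ, (fun Q' => (Q', m)) '' (G.Dk m) := by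
      intro q hq
      exact Set.mem_iUnion.mpr ⟨q.2, ⟨q.1, (hF1 q hq).1, by simp⟩⟩
    exact (Set.countable_iUnion (fun m => ((hDkc m).image _))).mono hsub
  -- the bad part
  have hbad : sigmaE n E (⋃ q ∈ F, q.1) ≤ ENNReal.ofReal (1 - η) * sigmaE n E Q :=
    le_trans (measure_biUnion_le _ hFc _) hF2
  -- the good part, via Chebyshev
  set g : Amb n → ℝ≥0∞ := fun x => goodConeSq G W β ψ F (fun _ => 1) Q x ^ (p / 2) with hg
  have hgm : Measurable g :=
    (measurable_goodConeSq hE hEunb G W β hψ.2.2.1 F Q).pow_const (p / 2)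
  have hT : sigmaE n E {x ∈ Q | ENNReal.ofReal N < g x} ≤
      ENNReal.ofReal (η / 2) * sigmaE n E Q := by
    have hmark := mul_meas_ge_le_lintegral₀ (μ := (sigmaE n E).restrict Q)
      hgm.aemeasurable (ENNReal.ofReal N)
    have h1 : sigmaE n E {x ∈ Q | ENNReal.ofReal N < g x} ≤
        (sigmaE n E).restrict Q {x | ENNReal.ofReal N ≤ g x} := by
      rw [Measure.restrict_apply' hQmeas]
      refine measure_mono fun x hx => ⟨le_of_lt hx.2, hx.1⟩
    have h2 : ∫⁻ x, g x ∂((sigmaE n E).restrict Q) ≤ ENNReal.ofReal C₁' * sigmaE n E Q := hF3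
    have hN0 : ENNReal.ofReal N ≠ 0 := by
      simp [ENNReal.ofReal_eq_zero, not_le, hNpos]
    have h3 : (sigmaE n E).restrict Q {x | ENNReal.ofReal N ≤ g x} ≤
        ENNReal.ofReal C₁' * sigmaE n E Q / ENNReal.ofReal N := by
      rw [ENNReal.le_div_iff_mul_le (Or.inl hN0) (Or.inl ENNReal.ofReal_ne_top)]
      rw [mul_comm]
      exact le_trans hmark h2
    have h4 : ENNReal.ofReal C₁' * sigmaE n E Q / ENNReal.ofReal N =
        ENNReal.ofReal (η / 2) * sigmaE n E Q := by
      rw [div_eq_mul_inv, mul_right_comm, ← div_eq_mul_inv,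
        ← ENNReal.ofReal_div_of_pos hNpos]
      congr 2
      rw [hN]
      field_simp
    exact h1.trans (h3.trans_eq h4)
  -- inclusion of the superlevel set
  have hincl : {x ∈ Q | ENNReal.ofReal N <
        coneSq G W β ψ (fun _ => 1) Q x ^ (p / 2)} ⊆
      (⋃ q ∈ F, q.1) ∪ {x ∈ Q | ENNReal.ofReal N < g x} := by
    rintro x ⟨hxQ, hx⟩
    by_cases hxF : x ∈ ⋃ q ∈ F, q.1
    · exact Or.inl hxF
    · refine Or.inr ⟨hxQ, lt_of_lt_of_le hx ?_⟩
      refine ENNReal.rpow_le_rpow ?_ (by linarith : (0:ℝ) ≤ p / 2)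
      refine lintegral_mono_set ?_
      intro Y hY
      simp only [cone, Set.mem_iUnion, Set.mem_setOf_eq, exists_prop] at hY
      obtain ⟨k', Q', ⟨hQ'Dk, hxQ', hQ'sub⟩, hY'⟩ := hY
      simp only [goodCone, Set.mem_iUnion, Set.mem_setOf_eq, exists_prop]
      refine ⟨k', Q', ⟨hQ'Dk, hxQ', hQ'sub, ?_⟩, hY'⟩
      intro q hq hint
      by_contra hlt
      push_neg at hlt
      have hk : q.2 ≤ k' := by
        have := (zpow_le_zpow_iff_right₀ (by norm_num : (1:ℝ) < 2)).mp hlt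
        omega
      have hq1 := (hF1 q hq).1
      have hxq : x ∈ q.1 := by
        rcases lt_or_eq_of_le hk with h | h
        · rcases G.nested h q.1 hq1 Q' hQ'Dk with hsub | hdis
          · exact hsub hxQ'
          · rw [hdis] at hint
            exact absurd hint Set.not_nonempty_empty
        · by_cases heq : Q' = q.1
          · rw [← heq]; exact hxQ'
          · have hdis := G.pairwise_disj k' Q' hQ'Dk q.1 (h ▸ hq1) heq
            rw [hdis] at hint
            exact absurd hint Set.not_nonempty_empty
      exact hxF (Set.mem_biUnion hq hxq)
  calc sigmaE n E {x ∈ Q | ENNReal.ofReal N <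
        coneSq G W β ψ (fun _ => 1) Q x ^ (p / 2)}
      ≤ sigmaE n E ((⋃ q ∈ F, q.1) ∪ {x ∈ Q | ENNReal.ofReal N < g x}) :=
        measure_mono hincl
    _ ≤ sigmaE n E (⋃ q ∈ F, q.1) + sigmaE n E {x ∈ Q | ENNReal.ofReal N < g x} :=
        measure_union_le _ _
    _ ≤ ENNReal.ofReal (1 - η) * sigmaE n E Q + ENNReal.ofReal (η / 2) * sigmaE n E Q :=
        add_le_add hbad hT
    _ = ENNReal.ofReal (1 - η / 2) * sigmaE n E Q := by
        rw [← add_mul, ← ENNReal.ofReal_add (by linarith) (by linarith)]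
        congr 2
        ring

end LocalTb
end
end

section
/- Far-away square function estimate for bounded ADR sets: Suppose E is bounded and set r₀ := diam(E). Let B be any ball of radius r₀ containing E and let 8B denote the concentric ball of radius 8r₀. Then there is a constant C, depending only on n, α, C_ψ and the ADR constant C_E, such that for every f ∈ L²(σ): ∬_{ℝ^{n+1} \ 8B} |Θf(Y)|² dY / δ(Y) ≤ C ∫_E |f(x)|² dσ(x). -/
open MeasureTheory Metric Set ENNReal NNReal

noncomputable section

namespace LocalTb

variable {n : ℕ} {E : Set (Amb n)}

theorem far_away_square_function_bounded
    {n : ℕ} (hn : 1 ≤ n) {E : Set (Amb n)} {CE : ℝ} (hE : IsADR n E CE)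
    (hEb : Bornology.IsBounded E)
    {ψ : Amb n → Amb n → ℂ} {α Cψ : ℝ} (hψ : KernelCond n E ψ α Cψ) :
    ∃ C : ℝ, 0 < C ∧ ∀ x₀ : Amb n, E ⊆ closedBall x₀ (Metric.diam E) →
      ∀ f : Amb n → ℂ, MemLp f 2 (sigmaE n E) →
        ∫⁻ Y in (closedBall x₀ (8 * Metric.diam E))ᶜ,
            (‖Theta n E ψ f Y‖₊ : ℝ≥0∞) ^ 2 / ENNReal.ofReal (del E Y) ∂volume ≤
          ENNReal.ofReal C * ∫⁻ x, (‖f x‖₊ : ℝ≥0∞) ^ 2 ∂(sigmaE n E) := by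
  obtain ⟨hEc, hCE1, hADR⟩ := hE
  obtain ⟨hα, hCψ, hmeas, hsize, -⟩ := hψ
  by_cases hσ0 : sigmaE n E = 0
  · refine ⟨1, one_pos, fun x₀ _ f _ => ?_⟩
    have hΘ : ∀ Y, Theta n E ψ f Y = 0 := fun Y => by
      simp [Theta, hσ0]
    simp [hΘ]
  -- nondegenerate case
  have hEne : E.Nonempty := by
    rcases Set.eq_empty_or_nonempty E with h | h
    · exact absurd (by simp [sigmaE, h]) hσ0
    · exact h
  set r₀ : ℝ := Metric.diam E with hr₀def
  have hnR : (0:ℝ) < (n:ℝ) := by exact_mod_cast Nat.lt_of_lt_of_le Nat.zero_lt_one hn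
  have hr₀ : 0 < r₀ := by
    rcases lt_or_eq_of_le (Metric.diam_nonneg (s := E)) with h | h
    · exact h
    · exfalso
      obtain ⟨x, hx⟩ := hEne
      have hsub : E ⊆ {x} := fun y hy => by
        have h1 : dist y x ≤ r₀ := Metric.dist_le_diam_of_mem hEb hy hx
        rw [hr₀def, ← h] at h1
        simpa using le_antisymm h1 dist_nonneg
      haveI : NoAtoms (μH[(n:ℝ)] : Measure (Amb n)) :=
        MeasureTheory.Measure.noAtoms_hausdorff _ hnR
      have h1 : sigmaE n E Set.univ = 0 := by
        have h2 : sigmaE n E Set.univ = μH[(n:ℝ)] E := by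
          simp [sigmaE]
        rw [h2]
        exact le_antisymm ((measure_mono hsub).trans (this.measure_singleton x).le) zero_le
      exact hσ0 (Measure.measure_univ_eq_zero.mp h1)
  have hed : ENNReal.ofReal r₀ = EMetric.diam E := by
    rw [hr₀def, Metric.diam, ENNReal.ofReal_toReal hEb.ediam_ne_top]
    rfl
  have hK : IsCompact E := Metric.isCompact_of_isClosed_isBounded hEc hEb
  -- finiteness of sigma
  set S : ℝ≥0∞ := sigmaE n E Set.univ with hSdef
  have hS : S < ∞ := by
    have hcov : E ⊆ ⋃ x ∈ E, ball x (r₀ / 2) :=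
      fun y hy => Set.mem_biUnion hy (mem_ball_self (by positivity))
    obtain ⟨t, htE, htfin, htcov⟩ :=
      hK.elim_finite_subcover_image (fun x _ => isOpen_ball) hcov
    have hcov2 : E ⊆ ⋃ x ∈ htfin.toFinset, (ball x (r₀ / 2) ∩ E) := by
      intro y hy
      obtain ⟨x, hxt, hyx⟩ := Set.mem_iUnion₂.mp (htcov hy)
      exact Set.mem_biUnion (htfin.mem_toFinset.mpr hxt) ⟨hyx, hy⟩
    calc S = μH[(n:ℝ)] E := by simp [hSdef, sigmaE]
      _ ≤ ∑ x ∈ htfin.toFinset, μH[(n:ℝ)] (ball x (r₀ / 2) ∩ E) :=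
          (measure_mono hcov2).trans (measure_biUnion_finset_le _ _)
      _ = ∑ x ∈ htfin.toFinset, sigmaE n E (ball x (r₀ / 2)) := by
          refine Finset.sum_congr rfl fun x _ => ?_
          rw [sigmaE, Measure.restrict_apply measurableSet_ball]
      _ ≤ ∑ x ∈ htfin.toFinset, ENNReal.ofReal (CE * (r₀ / 2) ^ n) := by
          refine Finset.sum_le_sum fun x hx => ?_
          refine (hADR x (htE (htfin.mem_toFinset.mp hx)) (r₀ / 2) (by positivity) ?_).2
          rw [← hed]
          exact (ENNReal.ofReal_lt_ofReal_iff hr₀).mpr (by linarith)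
      _ < ∞ := by
          rw [ENNReal.sum_lt_top]
          exact fun _ _ => ENNReal.ofReal_lt_top
  -- the tail integral constant
  set ρ : ℝ := ((2 * n + 1 : ℕ) : ℝ) with hρdef
  set T : ℝ≥0∞ := ∫⁻ Y : Amb n, ENNReal.ofReal ((1 + ‖Y‖) ^ (-ρ)) ∂volume with hTdef
  have hT : T < ∞ := by
    refine finite_integral_one_add_norm ?_
    rw [hρdef]
    have h2 : Module.finrank ℝ (Amb n) = n + 1 := finrank_euclideanSpace_fin
    rw [h2]
    push_cast
    linarith [hnR]
  set c : ℝ := 1 + (8 * r₀)⁻¹ with hcdef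
  have hc1 : (1:ℝ) ≤ c := by
    have h2 : (0:ℝ) < (8 * r₀)⁻¹ := by positivity
    rw [hcdef]; linarith
  set K₀ : ℝ := Cψ * (8 / 7) ^ n with hK₀def
  have hK₀ : 0 < K₀ := by rw [hK₀def]; positivity
  set c₂ : ℝ≥0∞ := ENNReal.ofReal (K₀ ^ 2 * (8 / 7)) with hc₂def
  set Ctot : ℝ≥0∞ := c₂ * S * ENNReal.ofReal (c ^ (2 * n + 1)) * T with hCtotdef
  have hCtot : Ctot ≠ ∞ := by
    rw [hCtotdef]
    exact ENNReal.mul_ne_top (ENNReal.mul_ne_top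
      (ENNReal.mul_ne_top ENNReal.ofReal_ne_top hS.ne) ENNReal.ofReal_ne_top) hT.ne
  refine ⟨Ctot.toReal + 1, by positivity, fun x₀ hx₀ f hf => ?_⟩
  have hCoR : Ctot ≤ ENNReal.ofReal (Ctot.toReal + 1) := by
    rw [ENNReal.ofReal_add ENNReal.toReal_nonneg zero_le_one,
      ENNReal.ofReal_toReal hCtot]
    simp
  set If : ℝ≥0∞ := ∫⁻ x, (‖f x‖₊ : ℝ≥0∞) ^ 2 ∂(sigmaE n E) with hIfdef
  by_cases hIftop : If = ∞
  · rw [hIftop, ENNReal.mul_top ?hC0]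
    · exact le_top
    case hC0 =>
      rw [Ne, ENNReal.ofReal_eq_zero, not_le]
      positivity
  -- Cauchy-Schwarz
  set I₁ : ℝ≥0∞ := ∫⁻ y, (‖f y‖₊ : ℝ≥0∞) ∂(sigmaE n E) with hI₁def
  have hCS : I₁ ^ 2 ≤ S * If := by
    have hconj : Real.HolderConjugate 2 2 := Real.HolderConjugate.two_two
    have hfm : AEMeasurable (fun y => (‖f y‖₊ : ℝ≥0∞)) (sigmaE n E) := hf.1.enorm
    have h2 := ENNReal.lintegral_mul_le_Lp_mul_Lq (sigmaE n E) hconj hfm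
      (aemeasurable_const (b := (1:ℝ≥0∞)))
    simp only [Pi.mul_apply, mul_one, ENNReal.one_rpow, lintegral_const,
      one_mul] at h2
    have hA : (∫⁻ y, (‖f y‖₊ : ℝ≥0∞) ^ (2:ℝ) ∂(sigmaE n E)) = If := by
      rw [hIfdef]
      congr 1
      ext y
      rw [show ((2:ℝ)) = ((2:ℕ):ℝ) by norm_num, ENNReal.rpow_natCast]
    have hsq : ∀ x : ℝ≥0∞, (x ^ ((1:ℝ)/2)) ^ 2 = x := by
      intro x
      rw [← ENNReal.rpow_natCast (x ^ ((1:ℝ)/2)) 2, ← ENNReal.rpow_mul]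
      norm_num
    calc I₁ ^ 2 ≤ ((∫⁻ y, (‖f y‖₊ : ℝ≥0∞) ^ (2:ℝ) ∂(sigmaE n E)) ^ ((1:ℝ)/2)
          * (sigmaE n E Set.univ) ^ ((1:ℝ)/2)) ^ 2 := by
          refine pow_le_pow_left₀ zero_le ?_ 2
          rw [hI₁def]
          exact le_trans (le_of_eq (by simp)) h2
      _ = If * S := by rw [mul_pow, hsq, hsq, hA, hSdef]
      _ = S * If := mul_comm _ _
  have hI₁fin : I₁ ≠ ∞ := by
    intro h
    have h3 : I₁ ^ 2 = ∞ := by rw [h]; simp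
    rw [h3] at hCS
    exact (ENNReal.mul_ne_top hS.ne hIftop) (eq_top_iff.mpr hCS)
  -- main pointwise bound on the far region
  set A : Set (Amb n) := (closedBall x₀ (8 * r₀))ᶜ with hAdef
  have hpoint : ∀ Y ∈ A,
      (‖Theta n E ψ f Y‖₊ : ℝ≥0∞) ^ 2 / ENNReal.ofReal (del E Y) ≤
        c₂ * I₁ ^ 2 * (ENNReal.ofReal (dist Y x₀ ^ (2 * n + 1)))⁻¹ := by
    intro Y hY
    set D : ℝ := dist Y x₀ with hDdef
    have hD : 8 * r₀ < D := by
      rw [hAdef, Set.mem_compl_iff, Metric.mem_closedBall, not_le] at hY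
      exact hY
    have hDpos : 0 < D := by linarith
    have hYE : Y ∉ E := fun h => by
      have h2 := hx₀ h
      rw [Metric.mem_closedBall, ← hDdef] at h2
      linarith
    have hdy : ∀ y ∈ E, 7 / 8 * D ≤ dist Y y := by
      intro y hy
      have h1 : dist Y x₀ ≤ dist Y y + dist y x₀ := dist_triangle _ _ _
      have h2 : dist y x₀ ≤ r₀ := by
        have h3 := hx₀ hy; rwa [Metric.mem_closedBall] at h3
      have h4 : r₀ ≤ D / 8 := by linarith
      rw [← hDdef] at h1
      linarith
    have hδ : 7 / 8 * D ≤ del E Y := by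
      obtain ⟨y, hy, hyd⟩ := hK.exists_infDist_eq_dist hEne Y
      rw [del, hyd]
      exact hdy y hy
    have hδpos : 0 < del E Y := by linarith
    -- kernel bound
    have hψb : ∀ y ∈ E, ‖ψ Y y‖ ≤ K₀ / D ^ n := by
      intro y hy
      set d : ℝ := dist Y y with hddef
      have hd : 7 / 8 * D ≤ d := hdy y hy
      have hdpos : 0 < d := by linarith
      have hδd : del E Y ≤ d := Metric.infDist_le_dist_of_mem hy
      have h1 : ‖ψ Y y‖ ≤ Cψ * del E Y ^ α / d ^ ((n:ℝ) + α) :=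
        hsize Y hYE y hy
      have h2 : Cψ * del E Y ^ α / d ^ ((n:ℝ) + α) ≤ Cψ * d ^ α / d ^ ((n:ℝ) + α) := by
        gcongr
      have h3 : Cψ * d ^ α / d ^ ((n:ℝ) + α) = Cψ / d ^ n := by
        rw [Real.rpow_add hdpos, Real.rpow_natCast]
        exact mul_div_mul_right _ _ (Real.rpow_pos_of_pos hdpos α).ne'
      have h4 : Cψ / d ^ n ≤ K₀ / D ^ n := by
        rw [div_le_div_iff₀ (by positivity) (by positivity), hK₀def]
        have h78 : ((8:ℝ)/7) ^ n * ((7:ℝ)/8) ^ n = 1 := by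
          rw [← mul_pow]; norm_num
        have hdn : ((7:ℝ)/8) ^ n * D ^ n ≤ d ^ n := by
          rw [← mul_pow]
          exact pow_le_pow_left₀ (by positivity) hd n
        have h5 : Cψ * (8/7) ^ n * (((7:ℝ)/8) ^ n * D ^ n) ≤ Cψ * (8/7) ^ n * d ^ n :=
          mul_le_mul_of_nonneg_left hdn (by positivity)
        calc Cψ * D ^ n = Cψ * (8/7) ^ n * (((7:ℝ)/8) ^ n * D ^ n) := by
              linear_combination (-(Cψ * D ^ n)) * h78
          _ ≤ Cψ * (8/7) ^ n * d ^ n := h5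
      calc ‖ψ Y y‖ ≤ Cψ * del E Y ^ α / d ^ ((n:ℝ) + α) := h1
        _ ≤ Cψ * d ^ α / d ^ ((n:ℝ) + α) := h2
        _ = Cψ / d ^ n := h3
        _ ≤ K₀ / D ^ n := h4
    -- Theta bound
    have hΘb : (‖Theta n E ψ f Y‖₊ : ℝ≥0∞) ≤ ENNReal.ofReal (K₀ / D ^ n) * I₁ := by
      refine le_trans (enorm_integral_le_lintegral_enorm _) ?_
      have hst : ∫⁻ y, (‖ψ Y y * f y‖₊ : ℝ≥0∞) ∂(sigmaE n E)
          ≤ ∫⁻ y, ENNReal.ofReal (K₀ / D ^ n) * (‖f y‖₊ : ℝ≥0∞) ∂(sigmaE n E) := by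
        refine lintegral_mono_ae ?_
        have hae : ∀ᵐ y ∂(sigmaE n E), y ∈ E := by
          rw [sigmaE]; exact ae_restrict_mem hEc.measurableSet
        filter_upwards [hae] with y hy
        rw [nnnorm_mul, ENNReal.coe_mul]
        refine mul_le_mul_left ?_ _
        rw [← ENNReal.ofReal_coe_nnreal, coe_nnnorm]
        refine ENNReal.ofReal_le_ofReal ?_
        exact hψb y hy
      rwa [lintegral_const_mul' _ _ ENNReal.ofReal_ne_top, ← hI₁def] at hst
    -- assemble the pointwise bound
    have hb1 : (‖Theta n E ψ f Y‖₊ : ℝ≥0∞) ^ 2 / ENNReal.ofReal (del E Y) ≤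
        (ENNReal.ofReal (K₀ / D ^ n) * I₁) ^ 2 / ENNReal.ofReal (7 / 8 * D) :=
      ENNReal.div_le_div (pow_le_pow_left₀ zero_le hΘb 2)
        (ENNReal.ofReal_le_ofReal hδ)
    have hb2 : (ENNReal.ofReal (K₀ / D ^ n) * I₁) ^ 2 / ENNReal.ofReal (7 / 8 * D) =
        c₂ * I₁ ^ 2 * (ENNReal.ofReal (D ^ (2 * n + 1)))⁻¹ := by
      have hreal : (K₀ / D ^ n) ^ 2 / (7 / 8 * D) =
          K₀ ^ 2 * (8 / 7) / D ^ (2 * n + 1) := by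
        rw [div_pow, ← pow_mul]
        rw [div_div, div_eq_div_iff (by positivity) (by positivity)]
        ring
      rw [mul_pow, ← ENNReal.ofReal_pow (by positivity)]
      rw [show ENNReal.ofReal ((K₀ / D ^ n) ^ 2) * I₁ ^ 2 / ENNReal.ofReal (7/8*D)
          = (ENNReal.ofReal ((K₀ / D ^ n) ^ 2) / ENNReal.ofReal (7/8*D)) * I₁ ^ 2 by
        simp only [div_eq_mul_inv]; ring]
      rw [← ENNReal.ofReal_div_of_pos (by positivity), hreal,
        div_eq_mul_inv, ENNReal.ofReal_mul (by positivity),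
        ENNReal.ofReal_inv_of_pos (by positivity), ← hc₂def]
      ring
    exact hb1.trans (le_of_eq hb2)
  -- integrate the pointwise bound
  have hptJ : ∀ Y ∈ A, (ENNReal.ofReal (dist Y x₀ ^ (2 * n + 1)))⁻¹ ≤
      ENNReal.ofReal (c ^ (2 * n + 1)) *
        ENNReal.ofReal ((1 + ‖Y - x₀‖) ^ (-ρ)) := by
    intro Y hY
    set D : ℝ := dist Y x₀ with hDdef
    have hD : 8 * r₀ < D := by
      rw [hAdef, Set.mem_compl_iff, Metric.mem_closedBall, not_le] at hY
      exact hY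
    have hDpos : 0 < D := by linarith
    have hDn : D = ‖Y - x₀‖ := by rw [hDdef, dist_eq_norm]
    have h1D : 1 + D ≤ c * D := by
      have h2 : 1 ≤ D * (8 * r₀)⁻¹ := by
        rw [← div_eq_mul_inv]
        exact (one_le_div (by positivity)).mpr hD.le
      calc 1 + D ≤ D * (8 * r₀)⁻¹ + D := by linarith
        _ = c * D := by rw [hcdef]; ring
    have hk : (1 + D) ^ (2 * n + 1) ≤ c ^ (2 * n + 1) * D ^ (2 * n + 1) := by
      rw [← mul_pow]
      exact pow_le_pow_left₀ (by positivity) h1D _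
    have hrpow : (1 + ‖Y - x₀‖) ^ (-ρ) = ((1 + D) ^ (2 * n + 1))⁻¹ := by
      rw [← hDn, hρdef, Real.rpow_neg (by positivity), Real.rpow_natCast]
    rw [hrpow, ← ENNReal.ofReal_mul (by positivity),
      ← ENNReal.ofReal_inv_of_pos (by positivity)]
    refine ENNReal.ofReal_le_ofReal ?_
    rw [← one_div, ← div_eq_mul_inv,
      div_le_div_iff₀ (by positivity) (by positivity)]
    linarith [hk]
  have hJ : (∫⁻ Y in A, (ENNReal.ofReal (dist Y x₀ ^ (2 * n + 1)))⁻¹ ∂volume) ≤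
      ENNReal.ofReal (c ^ (2 * n + 1)) * T := by
    have hm2 : Measurable fun Y : Amb n =>
        ENNReal.ofReal (c ^ (2 * n + 1)) *
          ENNReal.ofReal ((1 + ‖Y - x₀‖) ^ (-ρ)) := by
      refine Measurable.const_mul ?_ _
      refine ENNReal.measurable_ofReal.comp ?_
      have hcont : Continuous fun Y : Amb n => (1 + ‖Y - x₀‖) ^ (-ρ) := by
        refine Continuous.rpow_const ?_ fun Y => Or.inl ?_
        · exact continuous_const.add ((continuous_id.sub continuous_const).norm)
        · positivity
      exact hcont.measurable
    calc (∫⁻ Y in A, (ENNReal.ofReal (dist Y x₀ ^ (2 * n + 1)))⁻¹ ∂volume)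
        ≤ ∫⁻ Y in A, ENNReal.ofReal (c ^ (2 * n + 1)) *
            ENNReal.ofReal ((1 + ‖Y - x₀‖) ^ (-ρ)) ∂volume :=
          setLIntegral_mono hm2 hptJ
      _ ≤ ∫⁻ Y, ENNReal.ofReal (c ^ (2 * n + 1)) *
            ENNReal.ofReal ((1 + ‖Y - x₀‖) ^ (-ρ)) ∂volume :=
          lintegral_mono' Measure.restrict_le_self le_rfl
      _ = ENNReal.ofReal (c ^ (2 * n + 1)) *
            ∫⁻ Y, ENNReal.ofReal ((1 + ‖Y - x₀‖) ^ (-ρ)) ∂volume :=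
          lintegral_const_mul' _ _ ENNReal.ofReal_ne_top
      _ = ENNReal.ofReal (c ^ (2 * n + 1)) * T := by
          rw [hTdef]
          congr 1
          exact lintegral_sub_right_eq_self
            (fun Z : Amb n => ENNReal.ofReal ((1 + ‖Z‖) ^ (-ρ))) x₀
  have hgm : Measurable fun Y : Amb n =>
      c₂ * I₁ ^ 2 * (ENNReal.ofReal (dist Y x₀ ^ (2 * n + 1)))⁻¹ := by
    refine Measurable.const_mul ?_ _
    refine Measurable.inv ?_
    exact ENNReal.measurable_ofReal.comp ((continuous_id.dist continuous_const).pow _).measurable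
  calc ∫⁻ Y in A, (‖Theta n E ψ f Y‖₊ : ℝ≥0∞) ^ 2 / ENNReal.ofReal (del E Y) ∂volume
      ≤ ∫⁻ Y in A, c₂ * I₁ ^ 2 *
          (ENNReal.ofReal (dist Y x₀ ^ (2 * n + 1)))⁻¹ ∂volume :=
        setLIntegral_mono hgm hpoint
    _ = c₂ * I₁ ^ 2 *
          ∫⁻ Y in A, (ENNReal.ofReal (dist Y x₀ ^ (2 * n + 1)))⁻¹ ∂volume :=
        lintegral_const_mul' _ _
          (ENNReal.mul_ne_top ENNReal.ofReal_ne_top (ENNReal.pow_ne_top hI₁fin))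
    _ ≤ c₂ * I₁ ^ 2 * (ENNReal.ofReal (c ^ (2 * n + 1)) * T) :=
        mul_le_mul_right hJ _
    _ ≤ c₂ * (S * If) * (ENNReal.ofReal (c ^ (2 * n + 1)) * T) := by
        exact mul_le_mul' (mul_le_mul_right hCS _) le_rfl
    _ = Ctot * If := by rw [hCtotdef]; ring
    _ ≤ ENNReal.ofReal (Ctot.toReal + 1) * If := mul_le_mul_left hCoR _


end LocalTb
end
end
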